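/- arXiv:math/0310317 — 7 statements merged into one kernel-verified Lean document; each statement's English description precedes it below -/
import Mathlib

section
/- (Kink Lemma) Suppose x ∈ X satisfies x_n = 1 and x_{n+1} = 0 (a ``kink'' at level n), and let k be the number of indices i < n with x_i = 1. Then the C(n,k)-th iterate of T returns x close to itself: (T^[C(n,k)] x)_i = x_i for all i < n, i.e., T^[C(n,k)] x agrees with x in the first n coordinates. -/
/-- Concatenation of a finite word `w` with an infinite tail `x`. -/
def cat (w : List Bool) (x : ℕ → Bool) : ℕ → Bool :=
  fun i => if h : i < w.length then w.get ⟨i, h⟩ else x (i - w.length)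

/-- `T` satisfies the Pascal adic law: `T(0ⁿ1ᵐ10x') = 1ᵐ0ⁿ01x'`
(here `0 = false`, `1 = true`). -/
def PascalLaw (T : (ℕ → Bool) → (ℕ → Bool)) : Prop :=
  ∀ (n m : ℕ) (x' : ℕ → Bool),
    T (cat (List.replicate n false ++ List.replicate m true ++ [true, false]) x')
      = cat (List.replicate m true ++ List.replicate n false ++ [false, true]) x'


def rkA : ℕ → ℕ → List Bool → ℕ
  | _, _, [] => 0
  | i, t, b :: l =>
      (if b then Nat.choose i (t + 1) else 0) + rkA (i + 1) (if b then t + 1 else t) l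

lemma rkA_append (u v : List Bool) (i t : ℕ) :
    rkA i t (u ++ v) = rkA i t u + rkA (i + u.length) (t + u.count true) v := by
  induction u generalizing i t with
  | nil => simp [rkA]
  | cons b l ih =>
      cases b
      · simp only [List.cons_append, List.append_eq, rkA, List.count_cons,
          List.length_cons, Bool.false_eq_true, if_false]
        norm_num
        rw [ih, show i + (l.length + 1) = i + 1 + l.length from by omega]
      · simp only [List.cons_append, List.append_eq, rkA, List.count_cons,
          List.length_cons, if_true]
        norm_num
        rw [ih, show i + (l.length + 1) = i + 1 + l.length from by omega,
          show t + (List.count true l + 1) = t + 1 + List.count true l from by omega]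
        omega

lemma rkA_replicate_false (a i t : ℕ) : rkA i t (List.replicate a false) = 0 := by
  induction a generalizing i with
  | zero => simp [rkA]
  | succ a ih => simp [List.replicate_succ, rkA, ih]

lemma rkA_diag (m i : ℕ) : rkA i i (List.replicate m true) = 0 := by
  induction m generalizing i with
  | zero => simp [rkA]
  | succ m ih => simp [List.replicate_succ, rkA, ih, Nat.choose_succ_self]

lemma rkA_true_run (b a : ℕ) :
    rkA a 0 (List.replicate (b + 1) true) + 1 = Nat.choose (a + b + 1) (b + 1) := by
  induction b with
  | zero => simp [rkA, Nat.choose_one_right]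
  | succ b ih =>
      have h : List.replicate (b + 2) true = List.replicate (b + 1) true ++ [true] := by
        rw [← List.replicate_succ' (n := b + 1) (a := true)]
      rw [h, rkA_append]
      simp only [List.length_replicate, List.count_replicate, if_pos rfl]
      norm_num
      have h2 : rkA (a + (b + 1)) (0 + (b + 1)) [true] = Nat.choose (a + b + 1) (b + 2) := by
        simp only [rkA, if_true]
        have : Nat.choose (a + (b + 1)) (0 + (b + 1) + 1) = Nat.choose (a + b + 1) (b + 2) := by
          congr 1 <;> omega
        simpa [rkA] using this
      rw [show a + (b+1) = a + b + 1 from by omega] at h2 ⊢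
      simp only [Nat.zero_add] at h2
      rw [h2]
      have hp : Nat.choose (a + b + 1 + 1) (b + 1 + 1) =
          Nat.choose (a + b + 1) (b + 1) + Nat.choose (a + b + 1) (b + 1 + 1) :=
        Nat.choose_succ_succ (a + b + 1) (b + 1)
      rw [show b + 2 = b + 1 + 1 from rfl] at h2 ⊢
      omega

def wrank (u : List Bool) : ℕ := rkA 0 0 u

lemma count_replicate_false (a : ℕ) : (List.replicate a false).count true = 0 := by
  simp [List.count_replicate]

lemma count_replicate_true (b : ℕ) : (List.replicate b true).count true = b := by
  simp [List.count_replicate]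

lemma wrank_canonical (a b : ℕ) (l : List Bool) :
    wrank (List.replicate a false ++ List.replicate b true ++ l)
      = rkA a 0 (List.replicate b true) + rkA (a + b) b l := by
  unfold wrank
  rw [List.append_assoc, rkA_append, rkA_replicate_false, rkA_append]
  simp [count_replicate_false, count_replicate_true]

lemma wrank_snoc_true (u : List Bool) :
    wrank (u ++ [true]) = wrank u + Nat.choose u.length (u.count true + 1) := by
  unfold wrank
  rw [rkA_append]
  simp [rkA]

lemma wrank_snoc_false (u : List Bool) :
    wrank (u ++ [false]) = wrank u := by
  unfold wrank
  rw [rkA_append]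
  simp [rkA]

lemma wrank_lt (u : List Bool) : wrank u < Nat.choose u.length (u.count true) := by
  induction u using List.reverseRecOn with
  | nil => simp [wrank, rkA]
  | append_singleton l b ih =>
      cases b
      · rw [wrank_snoc_false]
        simp only [List.count_append, List.length_append, List.length_singleton,
          List.count_singleton']
        norm_num
        calc wrank l < Nat.choose l.length (l.count true) := ih
          _ ≤ Nat.choose (l.length + 1) (l.count true) :=
              Nat.choose_le_choose _ (Nat.le_succ _)
      · rw [wrank_snoc_true]
        simp only [List.count_append, List.length_append, List.length_singleton,
          List.count_singleton']
        norm_num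
        have hp := Nat.choose_succ_succ l.length (l.count true)
        simp only [Nat.succ_eq_add_one] at hp
        omega

lemma decomp (u : List Bool) :
    (∃ a b, u = List.replicate a false ++ List.replicate b true) ∨
    (∃ a b r, u = List.replicate a false ++ List.replicate b true ++ [true, false] ++ r) := by
  induction u with
  | nil => exact Or.inl ⟨0, 0, rfl⟩
  | cons hd tl ih =>
      cases hd
      · rcases ih with ⟨a, b, h⟩ | ⟨a, b, r, h⟩
        · exact Or.inl ⟨a + 1, b, by simp [List.replicate_succ, h]⟩
        · exact Or.inr ⟨a + 1, b, r, by simp [List.replicate_succ, h]⟩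
      · rcases ih with ⟨a, b, h⟩ | ⟨a, b, r, h⟩
        · cases a with
          | zero => exact Or.inl ⟨0, b + 1, by simp [List.replicate_succ, h]⟩
          | succ a' =>
              refine Or.inr ⟨0, 0, List.replicate a' false ++ List.replicate b true, ?_⟩
              simp [h, List.replicate_succ]
        · cases a with
          | zero => exact Or.inr ⟨0, b + 1, r, by simp [List.replicate_succ, h]⟩
          | succ a' =>
              refine Or.inr ⟨0, 0, List.replicate a' false ++ List.replicate b true
                ++ [true, false] ++ r, ?_⟩
              simp [h, List.replicate_succ]

lemma wrank_max (a b : ℕ) :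
    wrank (List.replicate a false ++ List.replicate b true) + 1
      = Nat.choose (a + b) b := by
  have h := wrank_canonical a b []
  rw [List.append_nil] at h
  rw [h]
  cases b with
  | zero => simp [rkA]
  | succ b' =>
      have h2 := rkA_true_run b' a
      have h3 : rkA (a + (b' + 1)) (b' + 1) ([] : List Bool) = 0 := rfl
      rw [h3, show a + (b' + 1) = a + b' + 1 from by omega]
      omega

lemma wrank_inj : ∀ (N : ℕ) (u v : List Bool), u.length = N → v.length = N →
    u.count true = v.count true → wrank u = wrank v → u = v := by
  intro N
  induction N with
  | zero =>
      intro u v hu hv _ _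
      rw [List.length_eq_zero_iff] at hu hv
      rw [hu, hv]
  | succ N ih =>
      intro u v hu hv hc hr
      rcases List.eq_nil_or_concat u with rfl | ⟨u₀, b, rfl⟩
      · simp at hu
      rcases List.eq_nil_or_concat v with rfl | ⟨v₀, c, rfl⟩
      · simp at hv
      simp only [List.concat_eq_append] at hu hv hc hr ⊢
      simp only [List.length_append, List.length_singleton] at hu hv
      have hu₀ : u₀.length = N := by omega
      have hv₀ : v₀.length = N := by omega
      simp only [List.count_append, List.count_singleton'] at hc
      have hbu := wrank_lt u₀
      have hbv := wrank_lt v₀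
      cases b <;> cases c <;> norm_num at hc
      · rw [wrank_snoc_false, wrank_snoc_false] at hr
        rw [ih u₀ v₀ hu₀ hv₀ hc hr]
      · exfalso
        rw [wrank_snoc_false, wrank_snoc_true] at hr
        rw [hu₀, hc] at hbu
        rw [hv₀] at hr
        omega
      · exfalso
        rw [wrank_snoc_true, wrank_snoc_false] at hr
        rw [hv₀, ← hc] at hbv
        rw [hu₀] at hr
        omega
      · rw [wrank_snoc_true, wrank_snoc_true, hu₀, hv₀, hc] at hr
        have h2 : wrank u₀ = wrank v₀ := by omega
        rw [ih u₀ v₀ hu₀ hv₀ hc h2]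

lemma step_rank (a b : ℕ) (r : List Bool) :
    wrank (List.replicate b true ++ List.replicate a false ++ [false, true] ++ r)
      = wrank (List.replicate a false ++ List.replicate b true ++ [true, false] ++ r) + 1 := by
  have hL : wrank (List.replicate b true ++ List.replicate a false ++ [false, true] ++ r)
      = Nat.choose (a + b + 1) (b + 1) + rkA (a + b + 2) (b + 1) r := by
    unfold wrank
    rw [List.append_assoc, List.append_assoc, rkA_append]
    rw [show rkA 0 0 (List.replicate b true) = 0 from rkA_diag b 0]
    rw [rkA_append, rkA_replicate_false]
    simp only [List.length_replicate, count_replicate_true, count_replicate_false,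
      Nat.zero_add, Nat.add_zero]
    have h2 : rkA (b + a) b ([false, true] ++ r)
        = Nat.choose (b + a + 1) (b + 1) + rkA (b + a + 2) (b + 1) r := by
      simp only [List.cons_append, List.nil_append, rkA, Bool.false_eq_true, if_false,
        if_true]
      rw [show b + a + 1 + 1 = b + a + 2 from by omega]
      omega
    rw [h2, show b + a + 1 = a + b + 1 from by omega, show b + a + 2 = a + b + 2 from by omega]
  have hRw : List.replicate a false ++ List.replicate b true ++ [true, false] ++ r
      = List.replicate a false ++ List.replicate (b + 1) true ++ (false :: r) := by
    rw [List.replicate_succ' (n := b) (a := true)]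
    simp [List.append_assoc]
  have hR : wrank (List.replicate a false ++ List.replicate b true ++ [true, false] ++ r)
      = rkA a 0 (List.replicate (b + 1) true) + rkA (a + b + 2) (b + 1) r := by
    rw [hRw, wrank_canonical]
    have h3 : rkA (a + (b + 1)) (b + 1) (false :: r) = rkA (a + b + 2) (b + 1) r := by
      simp only [rkA, Bool.false_eq_true, if_false]
      rw [show a + (b + 1) + 1 = a + b + 2 from by omega]
      omega
    rw [h3]
  have h4 := rkA_true_run b a
  omega

lemma cat_append (w v : List Bool) (x : ℕ → Bool) :
    cat (w ++ v) x = cat w (cat v x) := by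
  funext i
  simp only [cat, List.length_append, List.get_eq_getElem]
  by_cases h1 : i < w.length
  · rw [dif_pos (by omega), dif_pos h1, List.getElem_append_left h1]
  · by_cases h2 : i < w.length + v.length
    · rw [dif_pos h2, dif_neg h1, dif_pos (by omega),
        List.getElem_append_right (by omega)]
    · rw [dif_neg h2, dif_neg h1, dif_neg (by omega)]
      congr 1
      omega

lemma step (T : (ℕ → Bool) → (ℕ → Bool)) (hT : PascalLaw T)
    (a b : ℕ) (r : List Bool) (x' : ℕ → Bool) :
    T (cat (List.replicate a false ++ List.replicate b true ++ [true, false] ++ r) x')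
      = cat (List.replicate b true ++ List.replicate a false ++ [false, true] ++ r) x' := by
  rw [cat_append (List.replicate a false ++ List.replicate b true ++ [true, false]) r,
    cat_append (List.replicate b true ++ List.replicate a false ++ [false, true]) r]
  exact hT a b (cat r x')

lemma iter_main (T : (ℕ → Bool) → (ℕ → Bool)) (hT : PascalLaw T) :
    ∀ (m : ℕ) (u : List Bool) (x' : ℕ → Bool),
      wrank u + m < Nat.choose u.length (u.count true) →
      ∃ v : List Bool, T^[m] (cat u x') = cat v x' ∧ v.length = u.length ∧
        v.count true = u.count true ∧ wrank v = wrank u + m := by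
  intro m
  induction m with
  | zero => intro u x' _; exact ⟨u, rfl, rfl, rfl, rfl⟩
  | succ m ih =>
      intro u x' hbound
      rcases decomp u with ⟨a, b, rfl⟩ | ⟨a, b, r, rfl⟩
      · exfalso
        have hmax := wrank_max a b
        have hlen : (List.replicate a false ++ List.replicate b true).length = a + b := by
          simp
        have hcnt : (List.replicate a false ++ List.replicate b true).count true = b := by
          simp [List.count_append, count_replicate_false, count_replicate_true]
        rw [hlen, hcnt] at hbound
        omega
      · have hstep := step T hT a b r x'
        have hlen : (List.replicate b true ++ List.replicate a false ++ [false, true] ++ r).length =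
            (List.replicate a false ++ List.replicate b true ++ [true, false] ++ r).length := by
          simp only [List.length_append, List.length_replicate, List.length_cons,
            List.length_nil]
          omega
        have hcnt : (List.replicate b true ++ List.replicate a false ++ [false, true] ++ r).count true =
            (List.replicate a false ++ List.replicate b true ++ [true, false] ++ r).count true := by
          simp only [List.count_append, count_replicate_false, count_replicate_true]
          simp [List.count_cons]
        have hrank := step_rank a b r
        have hbound' : wrank (List.replicate b true ++ List.replicate a false ++ [false, true] ++ r)
            + m < Nat.choose
              (List.replicate b true ++ List.replicate a false ++ [false, true] ++ r).length
              ((List.replicate b true ++ List.replicate a false ++ [false, true] ++ r).count true)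
            := by
          rw [hlen, hcnt, hrank]
          omega
        obtain ⟨v, hv1, hv2, hv3, hv4⟩ := ih _ x' hbound'
        refine ⟨v, ?_, by omega, by rw [hv3, hcnt], by omega⟩
        rw [Function.iterate_succ_apply, hstep, hv1]

lemma count_map_range (x : ℕ → Bool) (n : ℕ) :
    ((List.range n).map x).count true
      = ((Finset.range n).filter (fun i => x i = true)).card := by
  induction n with
  | zero => simp
  | succ n ih =>
      rw [List.range_succ, Finset.range_add_one, List.map_append, List.count_append,
        Finset.filter_insert]
      by_cases h : x n = true
      · rw [if_pos h, Finset.card_insert_of_notMem (by simp)]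
        simp [h, ih]
      · rw [if_neg h]
        have h2 : x n = false := by cases hxn : x n <;> simp_all
        simp [h2, ih]

/-- The Kink Lemma: if `x` has a kink at level `n` (i.e. `xₙ = 1`, `x_{n+1} = 0`)
and `k` is the number of indices `i < n` with `xᵢ = 1`, then `T^[C(n,k)] x`
agrees with `x` in the first `n` coordinates. -/
theorem kink_lemma (T : (ℕ → Bool) → (ℕ → Bool)) (hT : PascalLaw T)
    (x : ℕ → Bool) (n : ℕ) (h1 : x n = true) (h0 : x (n + 1) = false)
    (k : ℕ) (hk : k = ((Finset.range n).filter (fun i => x i = true)).card) :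
    ∀ i < n, (T^[Nat.choose n k] x) i = x i := by
  set w : List Bool := (List.range n).map x with hw
  have hwlen : w.length = n := by simp [hw]
  have hwget : ∀ i (h : i < n), w[i]'(by omega) = x i := by
    intro i h
    simp [hw]
  have hwcnt : w.count true = k := by rw [hw, count_map_range, hk]
  set x' : ℕ → Bool := fun i => x (i + (n + 2)) with hx'
  have hx : x = cat (w ++ [true, false]) x' := by
    funext i
    simp only [cat, List.length_append, hwlen, List.get_eq_getElem]
    by_cases hi : i < n + 2
    · rw [dif_pos (by simpa using hi)]
      by_cases hi2 : i < n
      · rw [List.getElem_append_left (by omega), hwget i hi2]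
      · rcases (by omega : i = n ∨ i = n + 1) with rfl | rfl
        · rw [List.getElem_append_right (by omega)]
          simp [hwlen, h1]
        · rw [List.getElem_append_right (by omega)]
          simp only [hwlen, show n + 1 - n = 1 from by omega]
          simp [h0]
    · rw [dif_neg (by simpa using hi)]
      simp only [hx', List.length_cons, List.length_nil]
      congr 1
      omega
  have hulen : (w ++ [true, false]).length = n + 2 := by simp [hwlen]
  have hucnt : (w ++ [true, false]).count true = k + 1 := by
    simp [List.count_append, hwcnt, List.count_cons]
  have hvlen : (w ++ [false, true]).length = n + 2 := by simp [hwlen]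
  have hvcnt : (w ++ [false, true]).count true = k + 1 := by
    simp [List.count_append, hwcnt, List.count_cons]
  have hranku : wrank (w ++ [true, false]) = wrank w + Nat.choose n (k + 1) := by
    have h2 : w ++ [true, false] = (w ++ [true]) ++ [false] := by simp
    rw [h2, wrank_snoc_false, wrank_snoc_true, hwlen, hwcnt]
  have hrankv : wrank (w ++ [false, true]) = wrank w + Nat.choose (n + 1) (k + 1) := by
    have h2 : w ++ [false, true] = (w ++ [false]) ++ [true] := by simp
    rw [h2, wrank_snoc_true, wrank_snoc_false]
    simp only [List.length_append, List.count_append, hwlen, hwcnt,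
      List.length_singleton, List.count_singleton']
    norm_num
  have hpascal : Nat.choose (n + 1) (k + 1) = Nat.choose n k + Nat.choose n (k + 1) :=
    Nat.choose_succ_succ n k
  have hvbound := wrank_lt (w ++ [false, true])
  rw [hvlen, hvcnt] at hvbound
  have hbound : wrank (w ++ [true, false]) + Nat.choose n k
      < Nat.choose (w ++ [true, false]).length ((w ++ [true, false]).count true) := by
    rw [hulen, hucnt, hranku]
    omega
  obtain ⟨v, hv1, hv2, hv3, hv4⟩ := iter_main T hT (Nat.choose n k) (w ++ [true, false]) x' hbound
  have hveq : v = w ++ [false, true] := by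
    apply wrank_inj (n + 2) v (w ++ [false, true]) (by omega) hvlen (by omega)
    rw [hv4, hranku, hrankv]
    omega
  intro i hi
  rw [hx, hv1, hveq]
  simp only [cat, hvlen, hulen, List.get_eq_getElem]
  rw [dif_pos (by omega), dif_pos (by omega),
    List.getElem_append_left (by omega), List.getElem_append_left (by omega)]
end

section
/- If x ∈ X has infinitely many indices i with x_i = 1 and x_{i+1} = 0 (equivalently, x is not eventually diagonal), then the forward orbit {T^j x : j ∈ ℕ} is dense in X for the product topology. -/
def patA (n m : ℕ) (x' : ℕ → Bool) : ℕ → Bool := fun i =>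
  if i < n then false else if i < n + m + 1 then true
  else if i = n + m + 1 then false else x' (i - (n + m + 2))

def patB (n m : ℕ) (x' : ℕ → Bool) : ℕ → Bool := fun i =>
  if i < m then true else if i < m + n + 1 then false
  else if i = m + n + 1 then true else x' (i - (n + m + 2))

lemma cat_eq_patA (n m : ℕ) (x' : ℕ → Bool) :
    cat (List.replicate n false ++ List.replicate m true ++ [true, false]) x' = patA n m x' := by
  funext i
  simp only [cat, patA, List.length_append, List.length_replicate, List.length_cons,
    List.length_nil]
  by_cases h1 : i < n
  · rw [dif_pos (by omega), if_pos h1]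
    rw [List.get_eq_getElem]
    rw [List.getElem_append_left (by simp; omega), List.getElem_append_left (by simp; omega)]
    simp
  · by_cases h2 : i < n + m + 1
    · rw [dif_pos (by omega), if_neg h1, if_pos h2]
      rw [List.get_eq_getElem]
      by_cases h3 : i < n + m
      · rw [List.getElem_append_left (by simp; omega), List.getElem_append_right (by simp; omega)]
        simp
      · rw [List.getElem_append_right (by simp; omega)]
        simp only [List.length_append, List.length_replicate]
        have : i - (n + m) = 0 := by omega
        simp [this]
    · by_cases h4 : i = n + m + 1
      · rw [dif_pos (by omega), if_neg h1, if_neg h2, if_pos h4]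
        rw [List.get_eq_getElem]
        rw [List.getElem_append_right (by simp; omega)]
        simp only [List.length_append, List.length_replicate]
        have : i - (n + m) = 1 := by omega
        simp [this]
      · rw [dif_neg (by omega), if_neg h1, if_neg h2, if_neg h4]
        try (congr 1; omega)

lemma cat_eq_patB (n m : ℕ) (x' : ℕ → Bool) :
    cat (List.replicate m true ++ List.replicate n false ++ [false, true]) x' = patB n m x' := by
  funext i
  simp only [cat, patB, List.length_append, List.length_replicate, List.length_cons,
    List.length_nil]
  by_cases h1 : i < m
  · rw [dif_pos (by omega), if_pos h1]
    rw [List.get_eq_getElem]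
    rw [List.getElem_append_left (by simp; omega), List.getElem_append_left (by simp; omega)]
    simp
  · by_cases h2 : i < m + n + 1
    · rw [dif_pos (by omega), if_neg h1, if_pos h2]
      rw [List.get_eq_getElem]
      by_cases h3 : i < m + n
      · rw [List.getElem_append_left (by simp; omega), List.getElem_append_right (by simp; omega)]
        simp
      · rw [List.getElem_append_right (by simp; omega)]
        simp only [List.length_append, List.length_replicate]
        have : i - (m + n) = 0 := by omega
        simp [this]
    · by_cases h4 : i = m + n + 1
      · rw [dif_pos (by omega), if_neg h1, if_neg h2, if_pos h4]
        rw [List.get_eq_getElem]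
        rw [List.getElem_append_right (by simp; omega)]
        simp only [List.length_append, List.length_replicate]
        have : i - (m + n) = 1 := by omega
        simp [this]
      · rw [dif_neg (by omega), if_neg h1, if_neg h2, if_neg h4]
        try (congr 1; omega)

lemma T_patA {T : (ℕ → Bool) → (ℕ → Bool)} (hT : PascalLaw T) (n m : ℕ) (x' : ℕ → Bool) :
    T (patA n m x') = patB n m x' := by
  rw [← cat_eq_patA, ← cat_eq_patB]; exact hT n m x'


open Finset in
noncomputable def fsum (f : ℕ → ℕ) (L : ℕ) (y : ℕ → Bool) : ℕ :=
  ∑ i ∈ Finset.range L, if y i then f i else 0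

noncomputable def wt (L : ℕ) (y : ℕ → Bool) : ℕ := fsum (fun _ => 1) L y
noncomputable def vl (L : ℕ) (y : ℕ → Bool) : ℕ := fsum (fun i => 2 ^ i) L y

open Finset

open Finset

lemma fsum_patA (f : ℕ → ℕ) {n m L : ℕ} (hL : n + m + 2 ≤ L) (x' : ℕ → Bool) :
    fsum f L (patA n m x') =
      (∑ i ∈ Ico n (n + m + 1), f i) +
        ∑ i ∈ Ico (n + m + 2) L, (if x' (i - (n + m + 2)) then f i else 0) := by
  unfold fsum
  rw [range_eq_Ico, ← Finset.sum_Ico_consecutive _ (Nat.zero_le (n + m + 2)) hL]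
  congr 1
  · rw [← Finset.sum_Ico_consecutive _ (Nat.zero_le n) (by omega : n ≤ n + m + 2),
      ← Finset.sum_Ico_consecutive _ (by omega : n ≤ n + m + 1) (by omega : n + m + 1 ≤ n + m + 2)]
    have h1 : ∑ i ∈ Ico 0 n, (if patA n m x' i then f i else 0) = 0 := by
      apply Finset.sum_eq_zero
      intro i hi
      simp only [mem_Ico] at hi
      simp [patA, hi.2]
    have h2 : ∑ i ∈ Ico n (n + m + 1), (if patA n m x' i then f i else 0)
        = ∑ i ∈ Ico n (n + m + 1), f i := by
      apply Finset.sum_congr rfl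
      intro i hi
      simp only [mem_Ico] at hi
      simp [patA, hi.2, if_neg (by omega : ¬ i < n)]
    have h3 : ∑ i ∈ Ico (n + m + 1) (n + m + 2), (if patA n m x' i then f i else 0) = 0 := by
      rw [Finset.sum_Ico_eq_sum_range]
      simp [patA]
    omega
  · apply Finset.sum_congr rfl
    intro i hi
    simp only [mem_Ico] at hi
    have : patA n m x' i = x' (i - (n + m + 2)) := by
      simp only [patA]; rw [if_neg (by omega : ¬ i < n), if_neg (by omega : ¬ i < n + m + 1),
        if_neg (by omega : ¬ i = n + m + 1)]
    rw [this]

lemma fsum_patB (f : ℕ → ℕ) {n m L : ℕ} (hL : n + m + 2 ≤ L) (x' : ℕ → Bool) :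
    fsum f L (patB n m x') =
      ((∑ i ∈ Ico 0 m, f i) + f (n + m + 1)) +
        ∑ i ∈ Ico (n + m + 2) L, (if x' (i - (n + m + 2)) then f i else 0) := by
  unfold fsum
  rw [range_eq_Ico, ← Finset.sum_Ico_consecutive _ (Nat.zero_le (n + m + 2)) hL]
  congr 1
  · rw [← Finset.sum_Ico_consecutive _ (Nat.zero_le m) (by omega : m ≤ n + m + 2),
      ← Finset.sum_Ico_consecutive _ (by omega : m ≤ n + m + 1) (by omega : n + m + 1 ≤ n + m + 2)]
    have h1 : ∑ i ∈ Ico 0 m, (if patB n m x' i then f i else 0)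
        = ∑ i ∈ Ico 0 m, f i := by
      apply Finset.sum_congr rfl
      intro i hi
      simp only [mem_Ico] at hi
      simp [patB, hi.2]
    have h2 : ∑ i ∈ Ico m (n + m + 1), (if patB n m x' i then f i else 0) = 0 := by
      apply Finset.sum_eq_zero
      intro i hi
      simp only [mem_Ico] at hi
      have hb : patB n m x' i = false := by
        simp only [patB]; rw [if_neg (by omega : ¬ i < m), if_pos (by omega : i < m + n + 1)]
      rw [hb]; simp
    have h3 : ∑ i ∈ Ico (n + m + 1) (n + m + 2), (if patB n m x' i then f i else 0)
        = f (n + m + 1) := by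
      have e : Ico (n + m + 1) (n + m + 2) = {n + m + 1} := by
        ext j; simp only [mem_Ico, Finset.mem_singleton]; omega
      rw [e, Finset.sum_singleton]
      have hb : patB n m x' (n + m + 1) = true := by
        simp only [patB]
        rw [if_neg (by omega), if_neg (by omega), if_pos (by omega)]
      rw [hb]; simp
    omega
  · apply Finset.sum_congr rfl
    intro i hi
    simp only [mem_Ico] at hi
    have : patB n m x' i = x' (i - (n + m + 2)) := by
      simp only [patB]; rw [if_neg (by omega : ¬ i < m), if_neg (by omega : ¬ i < m + n + 1),
        if_neg (by omega : ¬ i = m + n + 1)]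
    rw [this]

lemma wt_patAB {n m L : ℕ} (hL : n + m + 2 ≤ L) (x' : ℕ → Bool) :
    wt L (patA n m x') = wt L (patB n m x') := by
  unfold wt
  rw [fsum_patA _ hL, fsum_patB _ hL]
  simp [Nat.card_Ico]
  omega

lemma sum_pow_lt (K : ℕ) : (∑ i ∈ range K, 2 ^ i) < 2 ^ K := by
  induction K with
  | zero => simp
  | succ K ih => rw [Finset.sum_range_succ]; have := Nat.one_le_two_pow (n := K); omega

lemma vl_patAB {n m L : ℕ} (hL : n + m + 2 ≤ L) (x' : ℕ → Bool) :
    vl L (patA n m x') < vl L (patB n m x') := by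
  unfold vl
  rw [fsum_patA _ hL, fsum_patB _ hL]
  have h1 : (∑ i ∈ Ico n (n + m + 1), 2 ^ i) < 2 ^ (n + m + 1) := by
    calc (∑ i ∈ Ico n (n + m + 1), 2 ^ i) ≤ ∑ i ∈ range (n + m + 1), 2 ^ i := by
          apply Finset.sum_le_sum_of_subset
          rw [range_eq_Ico]; exact Finset.Ico_subset_Ico (Nat.zero_le n) le_rfl
      _ < 2 ^ (n + m + 1) := sum_pow_lt _
  omega

lemma wt_le (L : ℕ) (y : ℕ → Bool) : wt L y ≤ L := by
  unfold wt fsum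
  calc (∑ i ∈ range L, if y i then 1 else 0) ≤ ∑ _i ∈ range L, 1 :=
        Finset.sum_le_sum (fun i _ => by split <;> omega)
    _ = L := by simp

lemma wt_succ (L : ℕ) (y : ℕ → Bool) :
    wt (L + 1) y = wt L y + (if y L then 1 else 0) := by
  unfold wt fsum; rw [Finset.sum_range_succ]

lemma vl_succ (L : ℕ) (y : ℕ → Bool) :
    vl (L + 1) y = vl L y + (if y L then 2 ^ L else 0) := by
  unfold vl fsum; rw [Finset.sum_range_succ]

lemma vl_lt (L : ℕ) (y : ℕ → Bool) : vl L y < 2 ^ L := by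
  induction L with
  | zero => simp [vl, fsum]
  | succ L ih =>
      rw [vl_succ]
      have : (2:ℕ) ^ (L + 1) = 2 ^ L + 2 ^ L := by ring
      split <;> omega

lemma vl_ge (L : ℕ) (y : ℕ → Bool) : 2 ^ (wt L y) ≤ vl L y + 1 := by
  induction L with
  | zero => simp [vl, wt, fsum]
  | succ L ih =>
      rw [wt_succ, vl_succ]
      have h1 : wt L y ≤ L := wt_le L y
      have h2 : (2:ℕ) ^ (wt L y) ≤ 2 ^ L := Nat.pow_le_pow_right (by norm_num) h1
      by_cases h : y L
      · rw [if_pos h, if_pos h, pow_succ]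
        omega
      · simp only [if_neg h, add_zero]; omega

lemma vl_le (L : ℕ) (y : ℕ → Bool) : vl L y + 2 ^ (L - wt L y) ≤ 2 ^ L := by
  induction L with
  | zero => simp [vl, wt, fsum]
  | succ L ih =>
      rw [wt_succ, vl_succ]
      have h1 : wt L y ≤ L := wt_le L y
      by_cases h : y L
      · rw [if_pos h, if_pos h]
        have : L + 1 - (wt L y + 1) = L - wt L y := by omega
        rw [this, pow_succ]
        omega
      · simp only [if_neg h, add_zero]
        have : L + 1 - wt L y = (L - wt L y) + 1 := by omega
        rw [this, pow_succ, pow_succ]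
        have := vl_lt L y
        omega

lemma vl_inj {L : ℕ} {a b : ℕ → Bool} (h : vl L a = vl L b) : ∀ i < L, a i = b i := by
  induction L with
  | zero => omega
  | succ L ih =>
      rw [vl_succ, vl_succ] at h
      have hab : a L = b L := by
        by_contra hne
        have h1 := vl_lt L a
        have h2 := vl_lt L b
        cases hA : a L <;> cases hB : b L <;> simp_all <;> omega
      rw [hab] at h
      have h' : vl L a = vl L b := by split at h <;> omega
      intro i hi
      rcases Nat.lt_succ_iff_lt_or_eq.1 hi with h'' | h''
      · exact ih h' i h''
      · subst h''; exact hab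


/-- Decomposition of a sequence with a kink `10` before position `L`. -/
lemma decompA {L : ℕ} {a : ℕ → Bool}
    (h : ∃ i, i + 1 < L ∧ a i = true ∧ a (i + 1) = false) :
    ∃ n m a', n + m + 2 ≤ L ∧ a = patA n m a' := by
  obtain ⟨i0, hi0L, hi0t, hi0f⟩ := h
  have ht : ∃ i, a i = true := ⟨i0, hi0t⟩
  set n := Nat.find ht with hn
  have hnt : a n = true := Nat.find_spec ht
  have hnmin : ∀ j, j < n → a j = false := by
    intro j hj
    have := Nat.find_min ht hj
    simpa using this
  have hni0 : n ≤ i0 := Nat.find_min' ht hi0t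
  have hf : ∃ j, a (n + 1 + j) = false := ⟨i0 - n, by rwa [show n + 1 + (i0 - n) = i0 + 1 by omega]⟩
  set m := Nat.find hf with hm
  have hmf : a (n + 1 + m) = false := Nat.find_spec hf
  have hmmin : ∀ j, j < m → a (n + 1 + j) = true := by
    intro j hj
    have := Nat.find_min hf hj
    simpa using this
  have hmle : m ≤ i0 - n := Nat.find_min' hf (by rwa [show n + 1 + (i0 - n) = i0 + 1 by omega])
  refine ⟨n, m, fun i => a (i + n + m + 2), by omega, ?_⟩
  funext i
  simp only [patA]
  by_cases h1 : i < n
  · rw [if_pos h1]; exact hnmin i h1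
  · by_cases h2 : i < n + m + 1
    · rw [if_neg h1, if_pos h2]
      rcases Nat.eq_or_lt_of_le (Nat.le_of_not_lt h1) with h | h
      · rw [← h]; exact hnt
      · have : i = n + 1 + (i - n - 1) := by omega
        rw [this]; exact hmmin _ (by omega)
    · by_cases h3 : i = n + m + 1
      · rw [if_neg h1, if_neg h2, if_pos h3, h3, show n + m + 1 = n + 1 + m by omega]
        exact hmf
      · rw [if_neg h1, if_neg h2, if_neg h3]
        congr 1
        omega

/-- Decomposition of a sequence with a rise `01` before position `L`. -/
lemma decompB {L : ℕ} {c : ℕ → Bool}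
    (h : ∃ i, i + 1 < L ∧ c i = false ∧ c (i + 1) = true) :
    ∃ n m c', n + m + 2 ≤ L ∧ c = patB n m c' := by
  obtain ⟨i0, hi0L, hi0f, hi0t⟩ := h
  have ht : ∃ i, c i = false := ⟨i0, hi0f⟩
  set m := Nat.find ht with hm
  have hmt : c m = false := Nat.find_spec ht
  have hmmin : ∀ j, j < m → c j = true := by
    intro j hj
    have := Nat.find_min ht hj
    simpa using this
  have hmi0 : m ≤ i0 := Nat.find_min' ht hi0f
  have hf : ∃ j, c (m + 1 + j) = true := ⟨i0 - m, by rwa [show m + 1 + (i0 - m) = i0 + 1 by omega]⟩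
  set n := Nat.find hf with hn
  have hnf : c (m + 1 + n) = true := Nat.find_spec hf
  have hnmin : ∀ j, j < n → c (m + 1 + j) = false := by
    intro j hj
    have := Nat.find_min hf hj
    simpa using this
  have hnle : n ≤ i0 - m := Nat.find_min' hf (by rwa [show m + 1 + (i0 - m) = i0 + 1 by omega])
  refine ⟨n, m, fun i => c (i + n + m + 2), by omega, ?_⟩
  funext i
  simp only [patB]
  by_cases h1 : i < m
  · rw [if_pos h1]; exact hmmin i h1
  · by_cases h2 : i < m + n + 1
    · rw [if_neg h1, if_pos h2]
      rcases Nat.eq_or_lt_of_le (Nat.le_of_not_lt h1) with h | h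
      · rw [← h]; exact hmt
      · have : i = m + 1 + (i - m - 1) := by omega
        rw [this]; exact hnmin _ (by omega)
    · by_cases h3 : i = m + n + 1
      · rw [if_neg h1, if_neg h2, if_pos h3, h3, show m + n + 1 = m + 1 + n by omega]
        exact hnf
      · rw [if_neg h1, if_neg h2, if_neg h3]
        congr 1
        omega

/-- Abstract reachability along a successor structure with an injective rank. -/
lemma reach {α : Type*} (s : α → α) (A : α → Prop) (rank : α → ℕ) (t : α)
    (hinj : ∀ a b, A a → A b → rank a = rank b → a = b)
    (hstep : ∀ a, A a → a ≠ t → A (s a) ∧ rank a < rank (s a))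
    (htop : ∀ a, A a → rank a ≤ rank t)
    (hpre : ∀ c a, A c → A a → rank a < rank c →
      ∃ b, A b ∧ b ≠ t ∧ s b = c ∧ rank b < rank c) :
    ∀ p u, A p → A u → rank p ≤ rank u → ∃ j, s^[j] p = u := by
  have noskip : ∀ R c a, rank c ≤ R → A c → A a → a ≠ t → rank a < rank c →
      rank (s a) ≤ rank c := by
    intro R
    induction R with
    | zero => intro c a hR hc ha hat hlt; omega
    | succ R ih =>
        intro c a hR hc ha hat hlt
        obtain ⟨b, hAb, hbt, hsb, hbc⟩ := hpre c a hc ha hlt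
        by_cases hab : a = b
        · rw [hab, hsb]
        · rcases lt_trichotomy (rank a) (rank b) with h | h | h
          · have := ih b a (by omega) hAb ha hat h
            omega
          · exact absurd (hinj a b ha hAb h) hab
          · have := ih a b (by omega) ha hAb hbt h
            rw [hsb] at this
            omega
  intro p u hp hu hle
  have H : ∀ d p, A p → rank p ≤ rank u → rank u - rank p ≤ d → ∃ j, s^[j] p = u := by
    intro d
    induction d with
    | zero =>
        intro p hp hle hd
        exact ⟨0, by simpa using hinj p u hp hu (by omega)⟩
    | succ d ih =>
        intro p hp hle hd
        rcases eq_or_lt_of_le hle with h | h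
        · exact ⟨0, by simpa using hinj p u hp hu h⟩
        · have hpt : p ≠ t := by
            intro e
            rw [e] at h
            exact absurd (htop u hu) (by omega)
          obtain ⟨hAs, hlt⟩ := hstep p hp hpt
          have hns : rank (s p) ≤ rank u := noskip (rank u) u p le_rfl hu hp hpt h
          obtain ⟨j, hj⟩ := ih (s p) hAs hns (by omega)
          exact ⟨j + 1, by rw [Function.iterate_succ_apply]; exact hj⟩
  exact H (rank u - rank p) p hp hle le_rfl


lemma Ico_pow {a b : ℕ} (h : a ≤ b) : (∑ i ∈ Ico a b, 2 ^ i) + 2 ^ a = 2 ^ b := by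
  induction b, h using Nat.le_induction with
  | base => simp
  | succ b hb ih =>
      rw [Finset.sum_Ico_succ_top (by omega)]
      have : (2:ℕ) ^ (b + 1) = 2 ^ b + 2 ^ b := by ring
      omega

lemma fsum_split (f : ℕ → ℕ) {M L : ℕ} (h : M ≤ L) (y : ℕ → Bool) :
    fsum f L y = fsum f M y + ∑ i ∈ Ico M L, (if y i then f i else 0) := by
  unfold fsum
  rw [range_eq_Ico, ← Finset.sum_Ico_consecutive _ (Nat.zero_le M) h, range_eq_Ico]

lemma mono_of_nokink {L : ℕ} {a : ℕ → Bool}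
    (h : ∀ i, i + 1 < L → a i = true → a (i + 1) = true) :
    ∀ i j, i ≤ j → j < L → a i = true → a j = true := by
  intro i j
  induction j with
  | zero => intro h1 _ hai; rwa [Nat.le_zero.mp h1] at hai
  | succ j ih =>
      intro h1 h2 hai
      rcases Nat.lt_succ_iff_lt_or_eq.mp (Nat.lt_succ_of_le h1) with h' | h'
      · exact h j h2 (ih (by omega) (by omega) hai)
      · rwa [← h']

lemma count_ge {L i : ℕ} {a : ℕ → Bool} (hiL : i ≤ L) (h : ∀ j, i ≤ j → j < L → a j = true) :
    L - i ≤ wt L a := by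
  have e1 : ∑ j ∈ Ico i L, (if a j then (1:ℕ) else 0) = L - i := by
    rw [Finset.sum_congr rfl (fun j hj => by
      simp only [mem_Ico] at hj; rw [if_pos (h j hj.1 hj.2)]), Finset.sum_const, smul_eq_mul,
      mul_one, Nat.card_Ico]
  have e2 : wt L a = wt i a + ∑ j ∈ Ico i L, (if a j then (1:ℕ) else 0) :=
    fsum_split _ hiL a
  omega

lemma count_le {L i : ℕ} {a : ℕ → Bool} (hiL : i ≤ L) (h : ∀ j, j < i → a j = false) :
    wt L a ≤ L - i := by
  have e2 : wt L a = wt i a + ∑ j ∈ Ico i L, (if a j then (1:ℕ) else 0) :=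
    fsum_split _ hiL a
  have e1 : wt i a = 0 := by
    unfold wt fsum
    apply Finset.sum_eq_zero
    intro j hj
    simp only [Finset.mem_range] at hj
    rw [h j hj]
    simp
  have e3 : ∑ j ∈ Ico i L, (if a j then (1:ℕ) else 0) ≤ L - i := by
    calc ∑ j ∈ Ico i L, (if a j then (1:ℕ) else 0) ≤ ∑ _j ∈ Ico i L, 1 :=
          Finset.sum_le_sum (fun j _ => by split <;> omega)
      _ = L - i := by simp [Nat.card_Ico]
  omega

/-- characterization of sorted (monotone) words. -/
lemma top_char {L k : ℕ} {a : ℕ → Bool} (hk : wt L a = k) (hkL : k ≤ L)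
    (hmono : ∀ i j, i ≤ j → j < L → a i = true → a j = true) :
    ∀ i, i < L → (a i = true ↔ L - k ≤ i) := by
  intro i hiL
  constructor
  · intro hai
    have := count_ge (le_of_lt hiL) (fun j h1 h2 => hmono i j h1 h2 hai)
    omega
  · intro hik
    by_contra hne
    have hfi : a i = false := by cases h : a i <;> simp_all
    have hall : ∀ j, j < i + 1 → a j = false := by
      intro j hj
      cases h : a j
      · rfl
      · exact absurd (hmono j i (by omega) hiL h) (by simp [hfi])
    have := count_le (by omega : i + 1 ≤ L) hall
    omega

lemma bot_char {L k : ℕ} {a : ℕ → Bool} (hk : wt L a = k) (hkL : k ≤ L)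
    (hmono : ∀ i j, i ≤ j → j < L → a j = true → a i = true) :
    ∀ i, i < L → (a i = true ↔ i < k) := by
  intro i hiL
  constructor
  · intro hai
    have h1 : ∀ j, j < i + 1 → a j = true := fun j hj => hmono j i (by omega) hiL hai
    have e2 : wt L a = wt (i+1) a + ∑ j ∈ Ico (i+1) L, (if a j then (1:ℕ) else 0) :=
      fsum_split _ (by omega) a
    have e1 : wt (i+1) a = i + 1 := by
      unfold wt fsum
      rw [Finset.sum_congr rfl (fun j hj => by
        simp only [Finset.mem_range] at hj; rw [if_pos (h1 j hj)])]
      simp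
    omega
  · intro hik
    by_contra hne
    have hfi : a i = false := by cases h : a i <;> simp_all
    have hall : ∀ j, i ≤ j → j < L → a j = false := by
      intro j h1 h2
      cases h : a j
      · rfl
      · exact absurd (hmono i j h1 h2 h) (by simp [hfi])
    have e2 : wt L a = wt i a + ∑ j ∈ Ico i L, (if a j then (1:ℕ) else 0) :=
      fsum_split _ (by omega) a
    have e1 : ∑ j ∈ Ico i L, (if a j then (1:ℕ) else 0) = 0 := by
      apply Finset.sum_eq_zero
      intro j hj
      simp only [mem_Ico] at hj
      rw [hall j hj.1 hj.2]; simp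
    have e3 : wt i a ≤ i - 0 := count_le (by omega) (fun j hj => by omega)
    omega

lemma key {T : (ℕ → Bool) → (ℕ → Bool)} (hT : PascalLaw T) {x : ℕ → Bool}
    (hx : {i : ℕ | x i = true ∧ x (i + 1) = false}.Infinite) (z : ℕ → Bool) (N : ℕ) :
    ∃ j, ∀ i < N, T^[j] x i = z i := by
  set Wy := wt N z with hWy
  set c := N + Wy + 1 with hc
  obtain ⟨s, hs_sub, hs_card⟩ := hx.exists_subset_card_eq c
  have hne : s.Nonempty := Finset.card_pos.mp (by omega)
  set i0 := s.max' hne with hi0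
  set L := i0 + 2 with hLdef
  have hkink : ∀ j ∈ s, x j = true ∧ x (j + 1) = false := fun j hj => hs_sub hj
  -- L is big
  have hcL : c + 1 ≤ L := by
    have h1 : s ⊆ range (i0 + 1) := fun j hj => mem_range.mpr (by
      have := Finset.le_max' s j hj; omega)
    have := Finset.card_le_card h1
    rw [hs_card, card_range] at this
    omega
  set k := wt L x with hk
  have hkL : k ≤ L := wt_le L x
  -- k ≥ c
  have hkc : c ≤ k := by
    have hsub2 : s ⊆ range L := fun j hj => mem_range.mpr (by
      have := Finset.le_max' s j hj; omega)
    have e1 : ∑ j ∈ s, (if x j then (1:ℕ) else 0) = c := by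
      rw [Finset.sum_congr rfl (fun j hj => if_pos (hkink j hj).1), Finset.sum_const,
        smul_eq_mul, mul_one, hs_card]
    have e2 : ∑ j ∈ s, (if x j then (1:ℕ) else 0)
        ≤ ∑ j ∈ range L, (if x j then (1:ℕ) else 0) :=
      Finset.sum_le_sum_of_subset hsub2
    have e3 : wt L x = ∑ j ∈ range L, (if x j then (1:ℕ) else 0) := rfl
    omega
  -- at least c falses in prefix: k + c ≤ L
  have hkfc : k + c ≤ L := by
    set F := ∑ i ∈ range L, (if x i = false then (1:ℕ) else 0) with hF
    have e0 : k + F = L := by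
      have hpt : ∀ i, (if x i then (1:ℕ) else 0) + (if x i = false then 1 else 0) = 1 :=
        fun i => by cases h : x i <;> simp [h]
      have e3 : wt L x = ∑ i ∈ range L, (if x i then (1:ℕ) else 0) := rfl
      rw [hk, e3, hF, ← Finset.sum_add_distrib]
      rw [Finset.sum_congr rfl (fun i _ => hpt i)]
      simp
    set s' := s.image (fun j => j + 1) with hs'
    have hcard' : s'.card = c := by
      rw [hs', Finset.card_image_of_injective s (fun a b h => by omega), hs_card]
    have hsub' : s' ⊆ range L := by
      intro j hj
      obtain ⟨j0, hj0, rfl⟩ := Finset.mem_image.mp hj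
      exact mem_range.mpr (by have := Finset.le_max' s j0 hj0; omega)
    have e1 : ∑ j ∈ s', (if x j = false then (1:ℕ) else 0) = c := by
      have hpt2 : ∀ j ∈ s', (if x j = false then (1:ℕ) else 0) = 1 := by
        intro j hj
        obtain ⟨j0, hj0, rfl⟩ := Finset.mem_image.mp hj
        rw [if_pos (hkink j0 hj0).2]
      rw [Finset.sum_congr rfl hpt2, Finset.sum_const, smul_eq_mul, mul_one, hcard']
    have e2 : ∑ j ∈ s', (if x j = false then (1:ℕ) else 0)
        ≤ ∑ j ∈ range L, (if x j = false then (1:ℕ) else 0) :=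
      Finset.sum_le_sum_of_subset hsub'
    omega
  set b := k - Wy with hb
  have hb1 : 1 ≤ b := by omega
  have hbNL : b + N + 1 ≤ L := by omega
  -- definitions of the special sequences
  set u : ℕ → Bool := fun i => if i < N then z i else if i < L - b then false
    else if i < L then true else x i with hu
  set tp : ℕ → Bool := fun i => if i < L - k then false else if i < L then true else x i with htp
  set A : (ℕ → Bool) → Prop := fun y => (∀ i, L ≤ i → y i = x i) ∧ wt L y = k with hA
  have hAx : A x := ⟨fun _ _ => rfl, rfl⟩
  -- weight of u
  have hwtu : wt L u = k := by
    have e1 : wt L u = wt N u + ∑ i ∈ Ico N L, (if u i then (1:ℕ) else 0) :=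
      fsum_split _ (by omega) u
    have e2 : ∑ i ∈ Ico N L, (if u i then (1:ℕ) else 0)
        = (∑ i ∈ Ico N (L - b), (if u i then (1:ℕ) else 0))
          + ∑ i ∈ Ico (L - b) L, (if u i then (1:ℕ) else 0) :=
      (Finset.sum_Ico_consecutive _ (by omega) (by omega)).symm
    have e3 : ∑ i ∈ Ico N (L - b), (if u i then (1:ℕ) else 0) = 0 := by
      apply Finset.sum_eq_zero
      intro i hi
      simp only [mem_Ico] at hi
      simp only [hu]
      rw [if_neg (show ¬ i < N by omega), if_pos (show i < L - b by omega)]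
      simp
    have e4 : ∑ i ∈ Ico (L - b) L, (if u i then (1:ℕ) else 0) = b := by
      rw [Finset.sum_congr rfl (fun i hi => by
        simp only [mem_Ico] at hi
        simp only [hu]
        rw [if_neg (show ¬ i < N by omega), if_neg (show ¬ i < L - b by omega),
          if_pos (show i < L by omega)]), Finset.sum_const]
      simp [Nat.card_Ico]
      omega
    have e5 : wt N u = Wy := by
      unfold wt fsum
      apply Finset.sum_congr rfl
      intro i hi
      simp only [Finset.mem_range] at hi
      simp only [hu]
      rw [if_pos hi]
    omega
  have hAu : A u := by
    constructor
    · intro i hi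
      simp only [hu]
      rw [if_neg (show ¬ i < N by omega), if_neg (show ¬ i < L - b by omega),
        if_neg (show ¬ i < L by omega)]
    · exact hwtu
  -- vl L x < vl L u
  have hvxu : vl L x < vl L u := by
    have hx1 : x (i0 + 1) = false := (hkink i0 (s.max'_mem hne)).2
    have hu1 : u (i0 + 1) = true := by
      simp only [hu]
      rw [if_neg (show ¬ i0 + 1 < N by omega), if_neg (show ¬ i0 + 1 < L - b by omega),
        if_pos (show i0 + 1 < L by omega)]
    have e1 : vl L x = vl (i0 + 1) x := by
      rw [hLdef, show i0 + 2 = (i0 + 1) + 1 from rfl, vl_succ, hx1]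
      simp
    have e2 : vl L u = vl (i0 + 1) u + 2 ^ (i0 + 1) := by
      rw [hLdef, show i0 + 2 = (i0 + 1) + 1 from rfl, vl_succ, hu1]
      simp
    have := vl_lt (i0 + 1) x
    omega
  -- rank injectivity
  have hinj : ∀ a b, A a → A b → vl L a = vl L b → a = b := by
    intro a b ha hb hv
    funext i
    by_cases hi : i < L
    · exact vl_inj hv i hi
    · rw [ha.1 i (by omega), hb.1 i (by omega)]
  -- htop
  have hvtp : vl L tp + 2 ^ (L - k) = 2 ^ L := by
    have e1 : vl L tp = vl (L - k) tp + ∑ i ∈ Ico (L - k) L, (if tp i then 2 ^ i else 0) :=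
      fsum_split _ (by omega) tp
    have e2 : vl (L - k) tp = 0 := by
      unfold vl fsum
      apply Finset.sum_eq_zero
      intro i hi
      simp only [Finset.mem_range] at hi
      simp only [htp]
      rw [if_pos (show i < L - k by omega)]
      simp
    have e3 : ∑ i ∈ Ico (L - k) L, (if tp i then 2 ^ i else 0) = ∑ i ∈ Ico (L - k) L, 2 ^ i := by
      apply Finset.sum_congr rfl
      intro i hi
      simp only [mem_Ico] at hi
      simp only [htp]
      rw [if_neg (show ¬ i < L - k by omega), if_pos (show i < L by omega)]
      simp
    rw [e1, e2, e3, zero_add]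
    exact Ico_pow (by omega)
  have htop : ∀ a, A a → vl L a ≤ vl L tp := by
    intro a ha
    have h1 := vl_le L a
    rw [ha.2] at h1
    omega
  -- hstep
  have hstep : ∀ a, A a → a ≠ tp → A (T a) ∧ vl L a < vl L (T a) := by
    intro a ha hat
    have hkinka : ∃ i, i + 1 < L ∧ a i = true ∧ a (i + 1) = false := by
      by_contra hno
      push_neg at hno
      have hmono : ∀ i j, i ≤ j → j < L → a i = true → a j = true := by
        apply mono_of_nokink
        intro i hi hai
        have := hno i hi hai
        cases h : a (i + 1)
        · exact absurd h this
        · rfl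
      have hchar := top_char ha.2 (by omega) hmono
      apply hat
      funext i
      by_cases hi : i < L
      · simp only [htp]
        by_cases h2 : i < L - k
        · rw [if_pos h2]
          cases h : a i
          · rfl
          · exact absurd ((hchar i hi).mp h) (by omega)
        · rw [if_neg h2, if_pos hi]
          exact (hchar i hi).mpr (by omega)
      · rw [ha.1 i (by omega)]
        simp only [htp]
        rw [if_neg (show ¬ i < L - k by omega), if_neg hi]
    obtain ⟨n, m, a', hnm, haeq⟩ := decompA hkinka
    have hTa : T a = patB n m a' := by rw [haeq]; exact T_patA hT n m a'
    refine ⟨⟨?_, ?_⟩, ?_⟩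
    · intro i hi
      rw [hTa, ← ha.1 i hi, haeq]
      simp only [patA, patB]
      rw [if_neg (show ¬ i < m by omega), if_neg (show ¬ i < m + n + 1 by omega),
        if_neg (show ¬ i = m + n + 1 by omega), if_neg (show ¬ i < n by omega),
        if_neg (show ¬ i < n + m + 1 by omega), if_neg (show ¬ i = n + m + 1 by omega)]
    · rw [hTa, ← wt_patAB hnm, ← haeq, ha.2]
    · rw [hTa, haeq]
      exact vl_patAB hnm a'
  -- hpre
  have hpre : ∀ c0 a, A c0 → A a → vl L a < vl L c0 →
      ∃ b0, A b0 ∧ b0 ≠ tp ∧ T b0 = c0 ∧ vl L b0 < vl L c0 := by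
    intro c0 a hc0 ha hv
    have hkinkc : ∃ i, i + 1 < L ∧ c0 i = false ∧ c0 (i + 1) = true := by
      by_contra hno
      push_neg at hno
      have hmono : ∀ i j, i ≤ j → j < L → c0 j = true → c0 i = true := by
        have hd : ∀ i j, i ≤ j → j < L → (!(c0 i)) = true → (!(c0 j)) = true := by
          apply mono_of_nokink
          intro i hi hdi
          have h1 : c0 i = false := by simpa using hdi
          have := hno i hi h1
          cases h : c0 (i + 1)
          · rfl
          · exact absurd h this
        intro i j hij hjL hcj
        cases h : c0 i
        · have := hd i j hij hjL (by simp [h])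
          rw [hcj] at this
          simpa using this
        · rfl
      have hchar := bot_char hc0.2 (by omega) hmono
      -- c0 is the bottom word, so vl L c0 + 1 = 2 ^ k, contradicting vl L a < vl L c0
      have e1 : vl L c0 = vl k c0 + ∑ i ∈ Ico k L, (if c0 i then 2 ^ i else 0) :=
        fsum_split _ (by omega) c0
      have e2 : ∑ i ∈ Ico k L, (if c0 i then 2 ^ i else 0) = 0 := by
        apply Finset.sum_eq_zero
        intro i hi
        simp only [mem_Ico] at hi
        cases h : c0 i
        · simp
        · exact absurd ((hchar i hi.2).mp h) (by omega)
      have e3 : vl k c0 = ∑ i ∈ Ico 0 k, 2 ^ i := by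
        unfold vl fsum
        rw [range_eq_Ico]
        apply Finset.sum_congr rfl
        intro i hi
        simp only [mem_Ico] at hi
        rw [(hchar i (by omega)).mpr hi.2]
        simp
      have e4 := Ico_pow (Nat.zero_le k)
      have e5 := vl_ge L a
      rw [ha.2] at e5
      simp only [pow_zero] at e4
      omega
    obtain ⟨n, m, c', hnm, hceq⟩ := decompB hkinkc
    set b0 := patA n m c' with hb0
    have hTb : T b0 = c0 := by rw [hb0, hceq]; exact T_patA hT n m c'
    have hvb : vl L b0 < vl L c0 := by rw [hceq]; exact vl_patAB hnm c'
    have hAb0 : A b0 := by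
      constructor
      · intro i hi
        rw [← hc0.1 i hi, hceq, hb0]
        simp only [patA, patB]
        rw [if_neg (show ¬ i < n by omega), if_neg (show ¬ i < n + m + 1 by omega),
          if_neg (show ¬ i = n + m + 1 by omega), if_neg (show ¬ i < m by omega),
          if_neg (show ¬ i < m + n + 1 by omega), if_neg (show ¬ i = m + n + 1 by omega)]
      · rw [hb0, wt_patAB hnm, ← hceq, hc0.2]
    refine ⟨b0, hAb0, ?_, hTb, hvb⟩
    intro e
    have h1 := htop c0 hc0
    rw [← e] at h1
    omega
  obtain ⟨j, hj⟩ := reach T A (vl L) tp hinj hstep htop hpre x u hAx hAu (le_of_lt hvxu)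
  refine ⟨j, fun i hi => ?_⟩
  rw [hj]
  simp only [hu]
  rw [if_pos hi]

/-- If `x` has infinitely many kinks (indices `i` with `xᵢ = 1`, `x_{i+1} = 0`),
then the forward orbit of `x` under `T` is dense in the product topology. -/
theorem dense_orbit (T : (ℕ → Bool) → (ℕ → Bool)) (hT : PascalLaw T)
    (x : ℕ → Bool) (hx : {i : ℕ | x i = true ∧ x (i + 1) = false}.Infinite) :
    Dense (Set.range fun j : ℕ => T^[j] x) := by
  rw [dense_iff_inter_open]
  rintro U hU ⟨z, hz⟩
  obtain ⟨I, v, hIv, hsub⟩ := isOpen_pi_iff.mp hU z hz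
  set N := (I.sup id) + 1 with hN
  obtain ⟨j, hj⟩ := key hT hx z N
  refine ⟨T^[j] x, hsub ?_, ⟨j, rfl⟩⟩
  intro a ha
  have haN : a < N := by
    have : id a ≤ I.sup id := Finset.le_sup ha
    simpa [hN] using Nat.lt_succ_of_le this
  rw [hj a haN]
  exact (hIv a ha).2
end

section
/- The Pascal adic is conjugate to its inverse via the symbol-exchange map: let S : X → X flip every coordinate, (Sx)_i = 1 − x_i. Then for every x ∈ X of the form x = 0ⁿ1ᵐ10x' (n, m ≥ 0, x' ∈ X), one has T(S(T(x))) = S(x). -/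
/-- The symbol-exchange map `S`, flipping every coordinate. -/
def S : (ℕ → Bool) → (ℕ → Bool) := fun x i => !(x i)

theorem S_cat (w : List Bool) (x : ℕ → Bool) :
    S (cat w x) = cat (w.map not) (S x) := by
  funext i
  simp only [S, cat, List.length_map]
  split_ifs <;> simp

theorem S_cat_blocks (b c d e : Bool) (n m : ℕ) (x : ℕ → Bool) :
    S (cat (List.replicate n b ++ List.replicate m c ++ [d, e]) x)
      = cat (List.replicate n (!b) ++ List.replicate m (!c) ++ [!d, !e]) (S x) := by
  simp [S_cat, List.map_replicate]

/-- The Pascal adic is conjugate to its inverse via `S`: for every point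
of the form `x = 0ⁿ1ᵐ10x'` one has `T(S(T(x))) = S(x)`. -/
theorem conjugate_to_inverse (T : (ℕ → Bool) → (ℕ → Bool)) (hT : PascalLaw T)
    (n m : ℕ) (x' : ℕ → Bool)
    (x : ℕ → Bool)
    (hx : x = cat (List.replicate n false ++ List.replicate m true ++ [true, false]) x') :
    T (S (T x)) = S x := by
  subst hx
  rw [hT, S_cat_blocks, S_cat_blocks]
  exact hT m n (S x')
end

section
/- (Scaled return-time limit) Fix l, m ∈ ℕ. Let (k_n) be a sequence of natural numbers with k_n ≤ n for all n, such that (2·k_n − n)/√n → 0 as n → ∞. Then √n · (C(n+l, k_n) + C(n+m, k_n + m) − C(n, k_n)) / 2ⁿ → √(2/π) · (2^l + 2^m − 1) as n → ∞. -/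
open Filter Real

open Stirling

lemma my_stirlingSeq_pos {a : ℕ} (ha : 1 ≤ a) : 0 < stirlingSeq a := by
  have : (0:ℝ) < a := by exact_mod_cast ha
  rw [stirlingSeq]
  positivity

lemma my_fac_eq {a : ℕ} (ha : 1 ≤ a) :
    (a.factorial : ℝ) = stirlingSeq a * (Real.sqrt (2*a) * ((a:ℝ)/Real.exp 1)^a) := by
  have h : (0:ℝ) < a := by exact_mod_cast ha
  rw [stirlingSeq, div_mul_cancel₀]
  positivity

lemma choose_eq (b c : ℕ) (hb : 1 ≤ b) (hc : 1 ≤ c) :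
    Real.sqrt (b+c) * ((b+c).choose b : ℝ) / 2^(b+c) =
    (stirlingSeq (b+c) / (stirlingSeq b * stirlingSeq c)) *
    (((b:ℝ)+c) / Real.sqrt (2 * b * c)) *
    (((b:ℝ)+c)^(b+c) / ((2*(b:ℝ))^b * (2*(c:ℝ))^c)) := by
  have hB : (0:ℝ) < b := by exact_mod_cast hb
  have hC : (0:ℝ) < c := by exact_mod_cast hc
  have hch : ((b+c).choose b : ℝ) = (((b+c).factorial) : ℝ) / (((b.factorial) : ℝ) * ((c.factorial) : ℝ)) := by
    rw [Nat.cast_choose ℝ (Nat.le_add_right b c), Nat.add_sub_cancel_left]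
  rw [hch, my_fac_eq (by omega : 1 ≤ b + c), my_fac_eq hb, my_fac_eq hc]
  have e1 : Real.sqrt (2*((b:ℝ)+c)) = Real.sqrt 2 * Real.sqrt ((b:ℝ)+c) :=
    Real.sqrt_mul (by norm_num) _
  have e2 : Real.sqrt (2*(b:ℝ)) = Real.sqrt 2 * Real.sqrt b := Real.sqrt_mul (by norm_num) _
  have e3 : Real.sqrt (2*(c:ℝ)) = Real.sqrt 2 * Real.sqrt c := Real.sqrt_mul (by norm_num) _
  have e4 : Real.sqrt (2*(b:ℝ)*c) = Real.sqrt 2 * Real.sqrt b * Real.sqrt c := by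
    rw [Real.sqrt_mul (by positivity), Real.sqrt_mul (by norm_num)]
  have s2 : Real.sqrt 2 * Real.sqrt 2 = 2 := Real.mul_self_sqrt (by norm_num)
  have sN : Real.sqrt ((b:ℝ)+c) * Real.sqrt ((b:ℝ)+c) = (b:ℝ)+c :=
    Real.mul_self_sqrt (by positivity)
  have hcast : ((b+c : ℕ):ℝ) = (b:ℝ)+c := by push_cast; ring
  have hdp : ∀ (x : ℝ) (n : ℕ), (x / Real.exp 1)^n = x^n / (Real.exp 1)^n := fun x n => div_pow x _ n
  have hexp : (Real.exp 1)^(b+c) = (Real.exp 1)^b * (Real.exp 1)^c := pow_add _ b c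
  have h2p : (2:ℝ)^(b+c) = 2^b * 2^c := pow_add 2 b c
  have hmb : (2*(b:ℝ))^b = 2^b * (b:ℝ)^b := mul_pow 2 _ b
  have hmc : (2*(c:ℝ))^c = 2^c * (c:ℝ)^c := mul_pow 2 _ c
  have hsb : Real.sqrt b ≠ 0 := by positivity
  have hsc : Real.sqrt c ≠ 0 := by positivity
  have hs2 : Real.sqrt 2 ≠ 0 := by positivity
  have hssb : stirlingSeq b ≠ 0 := (my_stirlingSeq_pos hb).ne'
  have hssc : stirlingSeq c ≠ 0 := (my_stirlingSeq_pos hc).ne'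
  have heb : (Real.exp 1)^b ≠ 0 := by positivity
  have hec : (Real.exp 1)^c ≠ 0 := by positivity
  have hbb : (b:ℝ)^b ≠ 0 := by positivity
  have hcc : (c:ℝ)^c ≠ 0 := by positivity
  have h2b : (2:ℝ)^b ≠ 0 := by positivity
  have h2c : (2:ℝ)^c ≠ 0 := by positivity
  rw [hcast, e1, e2, e3, e4, hdp, hdp, hdp, hexp, h2p, hmb, hmc]
  field_simp
  ring_nf
  rw [Real.sq_sqrt (by positivity : (0:ℝ) ≤ (b:ℝ)+c)]
  ring

lemma E_exp (b c : ℕ) (hb : 1 ≤ b) (hc : 1 ≤ c) :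
    ((b:ℝ)+c)^(b+c) / ((2*(b:ℝ))^b * (2*(c:ℝ))^c)
      = Real.exp (-((b:ℝ) * Real.log (2*(b:ℝ)/((b:ℝ)+c)) + (c:ℝ) * Real.log (2*(c:ℝ)/((b:ℝ)+c))))
    ∧ -((b:ℝ) * Real.log (2*(b:ℝ)/((b:ℝ)+c)) + (c:ℝ) * Real.log (2*(c:ℝ)/((b:ℝ)+c))) ≤ 0
    ∧ -(((b:ℝ) - c)^2/((b:ℝ)+c))
        ≤ -((b:ℝ) * Real.log (2*(b:ℝ)/((b:ℝ)+c)) + (c:ℝ) * Real.log (2*(c:ℝ)/((b:ℝ)+c))) := by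
  have hB : (0:ℝ) < b := by exact_mod_cast hb
  have hC : (0:ℝ) < c := by exact_mod_cast hc
  have hN : (0:ℝ) < (b:ℝ)+c := by positivity
  set u : ℝ := 2*(b:ℝ)/((b:ℝ)+c) with hu_def
  set v : ℝ := 2*(c:ℝ)/((b:ℝ)+c) with hv_def
  have hu : 0 < u := by rw [hu_def]; positivity
  have hv : 0 < v := by rw [hv_def]; positivity
  refine ⟨?_, ?_, ?_⟩
  · rw [Real.exp_neg, Real.exp_add, Real.exp_nat_mul, Real.exp_nat_mul,
      Real.exp_log hu, Real.exp_log hv, hu_def, hv_def, div_pow, div_pow]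
    have h1 : ((b:ℝ)+c)^(b+c) ≠ 0 := by positivity
    have h2 : (2*(b:ℝ))^b ≠ 0 := by positivity
    have h3 : (2*(c:ℝ))^c ≠ 0 := by positivity
    have h4 : ((b:ℝ)+c)^b * (((b:ℝ)+c))^c = ((b:ℝ)+c)^(b+c) := (pow_add _ b c).symm
    field_simp
    rw [h4]
  · have h1 : 1 - u⁻¹ ≤ Real.log u := Real.one_sub_inv_le_log_of_pos hu
    have h2 : 1 - v⁻¹ ≤ Real.log v := Real.one_sub_inv_le_log_of_pos hv
    have h1' : (b:ℝ) * (1 - u⁻¹) ≤ (b:ℝ) * Real.log u :=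
      mul_le_mul_of_nonneg_left h1 hB.le
    have h2' : (c:ℝ) * (1 - v⁻¹) ≤ (c:ℝ) * Real.log v :=
      mul_le_mul_of_nonneg_left h2 hC.le
    have e1 : (b:ℝ) * (1 - u⁻¹) + (c:ℝ) * (1 - v⁻¹) = 0 := by
      rw [hu_def, hv_def]
      field_simp
      ring
    linarith
  · have h1 : Real.log u ≤ u - 1 := Real.log_le_sub_one_of_pos hu
    have h2 : Real.log v ≤ v - 1 := Real.log_le_sub_one_of_pos hv
    have h1' : (b:ℝ) * Real.log u ≤ (b:ℝ) * (u - 1) :=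
      mul_le_mul_of_nonneg_left h1 hB.le
    have h2' : (c:ℝ) * Real.log v ≤ (c:ℝ) * (v - 1) :=
      mul_le_mul_of_nonneg_left h2 hC.le
    have e1 : (b:ℝ) * (u - 1) + (c:ℝ) * (v - 1) = ((b:ℝ) - c)^2/((b:ℝ)+c) := by
      rw [hu_def, hv_def]
      field_simp
      ring
    linarith

lemma core (j : ℕ → ℕ) (hj : ∀ n, j n ≤ n)
    (hα : Tendsto (fun n : ℕ => ((2 * (j n) : ℝ) - n) / Real.sqrt n) atTop (nhds 0)) :
    Tendsto (fun n : ℕ => Real.sqrt n * (Nat.choose n (j n) : ℝ) / 2 ^ n) atTop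
      (nhds (Real.sqrt (2 / Real.pi))) := by
  set α : ℕ → ℝ := fun n => ((2 * (j n) : ℝ) - n) / Real.sqrt n with hαdef
  have habs : ∀ᶠ n : ℕ in atTop, |α n| < 1 := by
    have := hα.eventually (Metric.ball_mem_nhds (0:ℝ) one_pos)
    simpa [Real.dist_eq] using this
  have hev : ∀ᶠ n : ℕ in atTop, |(2 * (j n) : ℝ) - n| ≤ Real.sqrt n := by
    filter_upwards [habs, eventually_ge_atTop 1] with n h1 h2
    have hsp : 0 < Real.sqrt n := Real.sqrt_pos.mpr (by exact_mod_cast h2)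
    simp only [hαdef, abs_div, abs_of_pos hsp] at h1
    calc |(2 * (j n) : ℝ) - n| = |(2 * (j n) : ℝ) - n| / Real.sqrt n * Real.sqrt n := by
          field_simp
      _ ≤ 1 * Real.sqrt n := mul_le_mul_of_nonneg_right (le_of_lt h1) hsp.le
      _ = Real.sqrt n := one_mul _
  have hsqle : ∀ n : ℕ, 4 ≤ n → Real.sqrt n ≤ (n:ℝ)/2 := by
    intro n hn
    have h4 : (4:ℝ) ≤ n := by exact_mod_cast hn
    have : ((n:ℝ)) ≤ ((n:ℝ)/2)^2 := by nlinarith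
    calc Real.sqrt n ≤ Real.sqrt (((n:ℝ)/2)^2) := Real.sqrt_le_sqrt this
      _ = (n:ℝ)/2 := Real.sqrt_sq (by positivity)
  have hbound : ∀ᶠ n : ℕ in atTop, (n:ℝ)/4 ≤ (j n : ℝ) ∧ (n:ℝ)/4 ≤ ((n - j n : ℕ) : ℝ) := by
    filter_upwards [hev, eventually_ge_atTop 4] with n h1 h4
    have hs := hsqle n h4
    have habs' := abs_le.mp h1
    have hc : ((n - j n : ℕ) : ℝ) = (n:ℝ) - (j n : ℝ) := by
      rw [Nat.cast_sub (hj n)]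
    constructor
    · nlinarith [habs'.1, habs'.2]
    · rw [hc]; nlinarith [habs'.1, habs'.2]
  have hquart : Tendsto (fun n : ℕ => (n:ℝ)/4) atTop atTop :=
    Tendsto.atTop_div_const (by norm_num) (tendsto_natCast_atTop_atTop (R := ℝ))
  have hj_top : Tendsto (fun n => j n) atTop atTop := by
    rw [← tendsto_natCast_atTop_iff (R := ℝ)]
    exact tendsto_atTop_mono' atTop (hbound.mono fun n h => h.1) hquart
  have hq_top : Tendsto (fun n => n - j n) atTop atTop := by
    rw [← tendsto_natCast_atTop_iff (R := ℝ)]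
    exact tendsto_atTop_mono' atTop (hbound.mono fun n h => h.2) hquart
  have hb : ∀ᶠ n : ℕ in atTop, 1 ≤ j n := hj_top.eventually_ge_atTop 1
  have hc : ∀ᶠ n : ℕ in atTop, 1 ≤ n - j n := hq_top.eventually_ge_atTop 1
  -- the three factors
  set S : ℕ → ℝ := fun n => stirlingSeq n / (stirlingSeq (j n) * stirlingSeq (n - j n))
    with hS_def
  set Q : ℕ → ℝ := fun n => (n:ℝ) / Real.sqrt (2 * (j n : ℝ) * ((n - j n : ℕ) : ℝ)) with hQ_def
  set E : ℕ → ℝ := fun n =>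
    (n:ℝ)^n / ((2*(j n:ℝ))^(j n) * (2*((n - j n : ℕ):ℝ))^(n - j n)) with hE_def
  set L : ℕ → ℝ := fun n =>
    -((j n : ℝ) * Real.log (2*(j n:ℝ)/n) + ((n - j n : ℕ):ℝ) * Real.log (2*((n - j n:ℕ):ℝ)/n))
    with hL_def
  have hFE : ∀ᶠ n : ℕ in atTop,
      Real.sqrt n * (Nat.choose n (j n) : ℝ) / 2 ^ n = S n * Q n * E n := by
    filter_upwards [hb, hc] with n h1 h2
    have hbc : j n + (n - j n) = n := Nat.add_sub_cancel' (hj n)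
    have key := choose_eq (j n) (n - j n) h1 h2
    rw [hbc] at key
    have hcs : (j n : ℝ) + ((n - j n : ℕ):ℝ) = (n:ℝ) := by
      rw [Nat.cast_sub (hj n)]; ring
    rw [hcs] at key
    exact key
  have hpi : Real.sqrt π ≠ 0 := (Real.sqrt_pos.mpr Real.pi_pos).ne'
  have hS : Tendsto S atTop (nhds (Real.sqrt π / (Real.sqrt π * Real.sqrt π))) := by
    apply Tendsto.div tendsto_stirlingSeq_sqrt_pi
    · exact (tendsto_stirlingSeq_sqrt_pi.comp hj_top).mul
        (tendsto_stirlingSeq_sqrt_pi.comp hq_top)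
    · exact mul_ne_zero hpi hpi
  have hα2 : Tendsto (fun n => (α n)^2 / n) atTop (nhds 0) := by
    have h1 : Tendsto (fun n : ℕ => (α n)^2) atTop (nhds 0) := by
      have := hα.mul hα
      simpa [pow_two] using this
    have h2 : Tendsto (fun n : ℕ => ((n:ℝ))⁻¹) atTop (nhds 0) :=
      tendsto_inv_atTop_zero.comp (tendsto_natCast_atTop_atTop (R := ℝ))
    simpa [div_eq_mul_inv] using h1.mul h2
  have hw : Tendsto (fun n : ℕ => 2 / (1 - (α n)^2 / n)) atTop (nhds 2) := by
    have h1 : Tendsto (fun n : ℕ => 1 - (α n)^2 / n) atTop (nhds 1) := by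
      simpa using (tendsto_const_nhds (x := (1:ℝ))).sub hα2
    have := (tendsto_const_nhds (x := (2:ℝ))).div h1 one_ne_zero
    rw [div_one] at this; exact this
  have hQ : Tendsto Q atTop (nhds (Real.sqrt 2)) := by
    have h1 : Tendsto (fun n : ℕ => Real.sqrt (2 / (1 - (α n)^2 / n))) atTop
        (nhds (Real.sqrt 2)) := (Real.continuous_sqrt.tendsto 2).comp hw
    apply h1.congr'
    filter_upwards [hb, hc, eventually_ge_atTop 1] with n h1' h2' h3'
    have hB : (0:ℝ) < (j n : ℝ) := by exact_mod_cast h1'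
    have hC : (0:ℝ) < ((n - j n : ℕ) : ℝ) := by exact_mod_cast h2'
    have hNpos : (0:ℝ) < (n:ℝ) := by exact_mod_cast h3'
    have hcs : ((n - j n : ℕ):ℝ) = (n:ℝ) - (j n : ℝ) := Nat.cast_sub (hj n)
    have hN : (n:ℝ) = (j n : ℝ) + ((n - j n : ℕ):ℝ) := by rw [hcs]; ring
    have hBC : (0:ℝ) < (j n : ℝ) + ((n - j n : ℕ):ℝ) := by positivity
    have hα_eq : α n ^ 2 / (n:ℝ)
        = ((j n:ℝ) - ((n - j n : ℕ):ℝ))^2 / ((j n : ℝ) + ((n - j n : ℕ):ℝ))^2 := by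
      simp only [hαdef]
      rw [div_pow, Real.sq_sqrt hNpos.le, div_div, ← pow_two, hN]
      congr 1
      ring
    have e5 : 1 - ((j n:ℝ) - ((n - j n : ℕ):ℝ))^2 / ((j n : ℝ) + ((n - j n : ℕ):ℝ))^2
        = 4*(j n:ℝ)*((n - j n : ℕ):ℝ) / ((j n : ℝ) + ((n - j n : ℕ):ℝ))^2 := by
      field_simp
      ring
    have e6 : 2 * ((j n : ℝ) + ((n - j n : ℕ):ℝ))^2 / (4*(j n:ℝ)*((n - j n : ℕ):ℝ))
        = ((j n : ℝ) + ((n - j n : ℕ):ℝ))^2 / (2*(j n:ℝ)*((n - j n : ℕ):ℝ)) := by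
      rw [div_eq_div_iff (by positivity) (by positivity)]
      ring
    simp only [hQ_def]
    rw [hα_eq, e5, div_div_eq_mul_div, e6, Real.sqrt_div (sq_nonneg _),
      Real.sqrt_sq hBC.le, hN]
  have hELbounds : ∀ᶠ n : ℕ in atTop,
      E n = Real.exp (L n) ∧ L n ≤ 0 ∧ -(α n)^2 ≤ L n := by
    filter_upwards [hb, hc, eventually_ge_atTop 1] with n h1 h2 h3
    have hbc : j n + (n - j n) = n := Nat.add_sub_cancel' (hj n)
    have hcs : (j n : ℝ) + ((n - j n : ℕ):ℝ) = (n:ℝ) := by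
      rw [Nat.cast_sub (hj n)]; ring
    have hNpos : (0:ℝ) < (n:ℝ) := by exact_mod_cast h3
    obtain ⟨p1, p2, p3⟩ := E_exp (j n) (n - j n) h1 h2
    rw [hbc] at p1
    rw [hcs] at p1 p2 p3
    refine ⟨by simpa [hE_def, hL_def] using p1, by simpa [hL_def] using p2, ?_⟩
    have hα_eq : (α n)^2 = ((j n:ℝ) - ((n - j n:ℕ):ℝ))^2 / (n:ℝ) := by
      simp only [hαdef]
      rw [div_pow, Real.sq_sqrt hNpos.le]
      congr 1
      rw [← hcs]
      ring
    rw [hα_eq]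
    simpa [hL_def] using p3
  have hL0 : Tendsto L atTop (nhds 0) := by
    have hlow : Tendsto (fun n : ℕ => -(α n)^2) atTop (nhds 0) := by
      have := hα.mul hα
      have h0 : Tendsto (fun n : ℕ => (α n)^2) atTop (nhds 0) := by
        simpa [pow_two] using this
      simpa using h0.neg
    exact tendsto_of_tendsto_of_tendsto_of_le_of_le' hlow tendsto_const_nhds
      (hELbounds.mono fun n h => h.2.2) (hELbounds.mono fun n h => h.2.1)
  have hE : Tendsto E atTop (nhds 1) := by
    have h1 : Tendsto (fun n : ℕ => Real.exp (L n)) atTop (nhds 1) := by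
      have := (Real.continuous_exp.tendsto 0).comp hL0
      rw [Real.exp_zero] at this; exact this
    exact h1.congr' (hELbounds.mono fun n h => h.1.symm)
  have hfinal := (hS.mul hQ).mul hE
  have hval : Real.sqrt π / (Real.sqrt π * Real.sqrt π) * Real.sqrt 2 * 1
      = Real.sqrt (2 / π) := by
    rw [Real.sqrt_div (by norm_num : (0:ℝ) ≤ 2)]
    field_simp
  rw [hval] at hfinal
  exact hfinal.congr' (hFE.mono fun n h => h.symm)

lemma sqrt_ratio_tendsto (p : ℕ) :
    Tendsto (fun n : ℕ => Real.sqrt n / Real.sqrt (n + p : ℕ)) atTop (nhds 1) := by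
  have h0 : Tendsto (fun n : ℕ => (n:ℝ) / ((n + p : ℕ):ℝ)) atTop (nhds 1) := by
    apply (tendsto_natCast_div_add_atTop (p:ℝ)).congr
    intro n
    push_cast
    rfl
  have h1 := (Real.continuous_sqrt.tendsto 1).comp h0
  rw [Real.sqrt_one] at h1
  apply h1.congr
  intro n
  simp only [Function.comp_apply]
  rw [Real.sqrt_div (Nat.cast_nonneg n)]

lemma sqrt_shift_atTop (p : ℕ) :
    Tendsto (fun n : ℕ => Real.sqrt ((n + p : ℕ):ℝ)) atTop atTop := by
  have h1 : Tendsto (fun n : ℕ => ((n + p : ℕ):ℝ)) atTop atTop :=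
    (tendsto_natCast_atTop_atTop (R := ℝ)).comp (tendsto_add_atTop_nat p)
  have h2 : Tendsto Real.sqrt atTop atTop := by
    apply (tendsto_rpow_atTop (by norm_num : (0:ℝ) < 1/2)).congr'
    filter_upwards [eventually_ge_atTop (0:ℝ)] with x hx
    rw [Real.sqrt_eq_rpow]
  exact h2.comp h1

lemma shifted_alpha (k : ℕ → ℕ) (p : ℕ)
    (hα : Tendsto (fun n : ℕ => ((2 * (k n) : ℝ) - n) / Real.sqrt n) atTop (nhds 0))
    (c : ℝ) :
    Tendsto (fun n : ℕ => ((2 * (k n) : ℝ) + c - (n + p : ℕ)) / Real.sqrt (n + p : ℕ))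
      atTop (nhds 0) := by
  have hmain := (hα.mul (sqrt_ratio_tendsto p)).add
    (Tendsto.div_atTop (tendsto_const_nhds (x := c - p)) (sqrt_shift_atTop p))
  have : (0:ℝ) * 1 + 0 = 0 := by norm_num
  rw [this] at hmain
  apply hmain.congr'
  filter_upwards [eventually_ge_atTop 1] with n hn
  have hs : (0:ℝ) < Real.sqrt n := Real.sqrt_pos.mpr (by exact_mod_cast hn)
  have hs2 : (0:ℝ) < Real.sqrt ((n + p : ℕ):ℝ) :=
    Real.sqrt_pos.mpr (by exact_mod_cast Nat.succ_le_of_lt (by omega))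
  field_simp
  push_cast
  ring

/-- Scaled return-time limit: if `k n ≤ n` and `(2 kₙ − n)/√n → 0`, then
`√n (C(n+l,kₙ) + C(n+m,kₙ+m) − C(n,kₙ)) / 2ⁿ → √(2/π) (2^l + 2^m − 1)`. -/
theorem scaled_return_time_limit (l m : ℕ) (k : ℕ → ℕ) (hk : ∀ n, k n ≤ n)
    (hα : Tendsto (fun n : ℕ => ((2 * (k n) : ℝ) - n) / Real.sqrt n) atTop (nhds 0)) :
    Tendsto
      (fun n : ℕ => Real.sqrt n *
        (((Nat.choose (n + l) (k n) : ℝ) + (Nat.choose (n + m) (k n + m) : ℝ)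
          - (Nat.choose n (k n) : ℝ)) / 2 ^ n))
      atTop
      (nhds (Real.sqrt (2 / Real.pi) * ((2 : ℝ) ^ l + 2 ^ m - 1))) := by
  have h3 := core k hk hα
  -- first shifted sequence
  set j1 : ℕ → ℕ := fun N => k (N - l) with hj1_def
  have hj1 : ∀ N, j1 N ≤ N := fun N => le_trans (hk _) (Nat.sub_le _ _)
  have hα1 : Tendsto (fun N : ℕ => ((2 * (j1 N) : ℝ) - N) / Real.sqrt N) atTop (nhds 0) := by
    rw [← tendsto_add_atTop_iff_nat l]
    apply (shifted_alpha k l hα 0).congr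
    intro n
    simp only [hj1_def, Nat.add_sub_cancel]
    norm_num
  have h1 := (core j1 hj1 hα1).comp (tendsto_add_atTop_nat l)
  simp only [Function.comp_def, hj1_def, Nat.add_sub_cancel] at h1
  -- second shifted sequence
  set j2 : ℕ → ℕ := fun N => min (k (N - m) + m) N with hj2_def
  have hj2 : ∀ N, j2 N ≤ N := fun N => min_le_right _ _
  have hj2eq : ∀ n : ℕ, j2 (n + m) = k n + m := by
    intro n
    simp only [hj2_def, Nat.add_sub_cancel]
    exact min_eq_left (by have := hk n; omega)
  have hα2 : Tendsto (fun N : ℕ => ((2 * (j2 N) : ℝ) - N) / Real.sqrt N) atTop (nhds 0) := by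
    rw [← tendsto_add_atTop_iff_nat m]
    apply (shifted_alpha k m hα (2*m)).congr
    intro n
    rw [hj2eq n]
    push_cast
    ring_nf
  have h2 := (core j2 hj2 hα2).comp (tendsto_add_atTop_nat m)
  have h2' : Tendsto (fun n : ℕ =>
      Real.sqrt ((n + m : ℕ):ℝ) * (Nat.choose (n + m) (k n + m) : ℝ) / 2 ^ (n + m)) atTop
      (nhds (Real.sqrt (2 / Real.pi))) := by
    apply h2.congr
    intro n
    simp only [Function.comp_def, hj2eq n]
  -- combine
  have hcomb := ((((tendsto_const_nhds (x := (2:ℝ)^l)).mul ((sqrt_ratio_tendsto l).mul h1))).add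
    ((tendsto_const_nhds (x := (2:ℝ)^m)).mul ((sqrt_ratio_tendsto m).mul h2'))).sub h3
  have hval : (2:ℝ)^l * (1 * Real.sqrt (2/π)) + (2:ℝ)^m * (1 * Real.sqrt (2/π))
      - Real.sqrt (2/π) = Real.sqrt (2/π) * ((2:ℝ)^l + 2^m - 1) := by ring
  rw [hval] at hcomb
  apply hcomb.congr'
  filter_upwards [eventually_ge_atTop 1] with n hn
  have hs1 : (0:ℝ) < Real.sqrt ((n + l : ℕ):ℝ) :=
    Real.sqrt_pos.mpr (by exact_mod_cast Nat.succ_le_of_lt (by omega))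
  have hs2 : (0:ℝ) < Real.sqrt ((n + m : ℕ):ℝ) :=
    Real.sqrt_pos.mpr (by exact_mod_cast Nat.succ_le_of_lt (by omega))
  rw [pow_add, pow_add]
  field_simp
end

section
/- (Generating partition / injectivity of the coding) Call x ∈ X eventually diagonal if there is N such that x_i = 0 for all i ≥ N or x_i = 1 for all i ≥ N. If x, y ∈ X are distinct and neither is eventually diagonal, then there exists j ≥ 0 such that (T^j x)_0 ≠ (T^j y)_0; that is, the two-set partition of X according to the first coordinate separates the orbits of distinct non-eventually-diagonal points. -/
/-- `x` is eventually diagonal: from some point on it is constantly `0` or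
constantly `1`. -/
def EventuallyDiagonal (x : ℕ → Bool) : Prop :=
  ∃ N : ℕ, (∀ i ≥ N, x i = false) ∨ (∀ i ≥ N, x i = true)

namespace PascalAux

lemma cat_wrd (p q : ℕ) (A B C D : Bool) (x : ℕ → Bool) (i : ℕ) :
    cat (List.replicate p A ++ (List.replicate q B ++ [C, D])) x i =
      if i < p then A else if i < p + q then B else if i = p + q then C
        else if i = p + q + 1 then D else x (i - (p + q + 2)) := by
  have hlen : (List.replicate p A ++ (List.replicate q B ++ [C, D])).length = p + q + 2 := by
    simp; omega
  unfold cat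
  by_cases h1 : i < p
  · rw [dif_pos (by omega : i < (List.replicate p A ++ (List.replicate q B ++ [C, D])).length)]
    simp [List.get_eq_getElem, List.getElem_append, h1]
  · by_cases h2 : i < p + q
    · rw [dif_pos (by omega : i < (List.replicate p A ++ (List.replicate q B ++ [C, D])).length)]
      simp [List.get_eq_getElem, List.getElem_append, h1, h2]
      intro h; omega
    · by_cases h3 : i = p + q
      · rw [dif_pos (by omega : i < (List.replicate p A ++ (List.replicate q B ++ [C, D])).length)]
        subst h3
        simp [List.get_eq_getElem, List.getElem_append, h1, h2]
      · by_cases h4 : i = p + q + 1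
        · rw [dif_pos (by omega : i < (List.replicate p A ++ (List.replicate q B ++ [C, D])).length)]
          subst h4
          simp [List.get_eq_getElem, List.getElem_append, h1, h2]
          simp only [show p + q + 1 - p = q + 1 from by omega]
          rw [dif_neg (by omega)]
          simp only [show q + 1 - q = 1 from by omega]
          rfl
        · rw [dif_neg (by omega)]
          rw [hlen]
          simp [h1, h2, h3, h4]

/-- infinitely many `false`s -/
def Inf0 (z : ℕ → Bool) : Prop := ∀ N, ∃ i, N ≤ i ∧ z i = false
/-- infinitely many `true`s -/
def Inf1 (z : ℕ → Bool) : Prop := ∀ N, ∃ i, N ≤ i ∧ z i = true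

lemma not_ED {z : ℕ → Bool} (h : ¬ EventuallyDiagonal z) : Inf0 z ∧ Inf1 z := by
  constructor <;> intro N
  · by_contra hN; push_neg at hN
    exact h ⟨N, Or.inr fun i hi => by
      have := hN i hi; revert this; cases z i <;> simp⟩
  · by_contra hN; push_neg at hN
    exact h ⟨N, Or.inl fun i hi => by
      have := hN i hi; revert this; cases z i <;> simp⟩

/-- canonical run decomposition of a point with infinitely many 0s and 1s -/
lemma decomp {z : ℕ → Bool} (h0 : Inf0 z) (h1 : Inf1 z) :
    ∃ n m : ℕ, (∀ i < n, z i = false) ∧ (∀ j ≤ m, z (n + j) = true) ∧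
      z (n + m + 1) = false := by
  have hne1 : {i | z i = true}.Nonempty := by
    obtain ⟨i, _, hi⟩ := h1 0; exact ⟨i, hi⟩
  have hzn : z (sInf {i | z i = true}) = true := Nat.sInf_mem hne1
  set n := sInf {i | z i = true} with hn
  have hlow : ∀ i < n, z i = false := by
    intro i hi
    rw [hn] at hi
    have := Nat.notMem_of_lt_sInf hi
    have : ¬ z i = true := this
    revert this; cases z i <;> simp
  have hne0 : {j | z (n + 1 + j) = false}.Nonempty := by
    obtain ⟨i, hi, hif⟩ := h0 (n + 1)
    refine ⟨i - (n + 1), ?_⟩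
    show z (n + 1 + (i - (n + 1))) = false
    rwa [show n + 1 + (i - (n+1)) = i from by omega]
  have hzm : z (n + 1 + sInf {j | z (n + 1 + j) = false}) = false := Nat.sInf_mem hne0
  set m := sInf {j | z (n + 1 + j) = false} with hm
  refine ⟨n, m, hlow, ?_, ?_⟩
  · intro j hj
    match j, hj with
    | 0, _ => simpa using hzn
    | (l+1), hj =>
      have hl : l ∉ {j | z (n + 1 + j) = false} := Nat.notMem_of_lt_sInf (by omega)
      have : ¬ z (n + 1 + l) = false := hl
      rw [show n + (l+1) = n + 1 + l from by omega]
      revert this; cases z (n+1+l) <;> simp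
  · rwa [show n + 1 + m = n + m + 1 from by omega] at hzm

/-- the main step computation: the action of `T` on a decomposed point -/
lemma Tstep {T : (ℕ → Bool) → (ℕ → Bool)} (hT : PascalLaw T) {z : ℕ → Bool} {n m : ℕ}
    (h0 : ∀ i < n, z i = false) (h1 : ∀ j ≤ m, z (n + j) = true)
    (h2 : z (n + m + 1) = false) :
    (∀ i < m, T z i = true) ∧ (∀ i, m ≤ i → i ≤ m + n → T z i = false) ∧
      (T z (m + n + 1) = true) ∧ (∀ i, n + m + 2 ≤ i → T z i = z i) := by
  set x' : ℕ → Bool := fun i => z (n + m + 2 + i) with hx'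
  have hz : z = cat (List.replicate n false ++ (List.replicate m true ++ [true, false])) x' := by
    funext i
    rw [cat_wrd]
    by_cases c1 : i < n
    · rw [if_pos c1]; exact h0 i c1
    · rw [if_neg c1]
      by_cases c2 : i < n + m
      · rw [if_pos c2]
        have := h1 (i - n) (by omega)
        rwa [show n + (i - n) = i from by omega] at this
      · rw [if_neg c2]
        by_cases c3 : i = n + m
        · rw [if_pos c3, c3]; exact h1 m le_rfl
        · rw [if_neg c3]
          by_cases c4 : i = n + m + 1
          · rw [if_pos c4, c4]; exact h2
          · rw [if_neg c4, hx']
            simp only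
            rw [show n + m + 2 + (i - (n + m + 2)) = i from by omega]
  have hTz : T z = cat (List.replicate m true ++ (List.replicate n false ++ [false, true])) x' := by
    rw [hz]
    have hlaw := hT n m x'
    rw [show List.replicate n false ++ List.replicate m true ++ [true, false]
        = List.replicate n false ++ (List.replicate m true ++ [true, false]) from by
      rw [List.append_assoc]] at hlaw
    rw [hlaw, List.append_assoc]
  refine ⟨?_, ?_, ?_, ?_⟩
  · intro i hi; rw [hTz, cat_wrd, if_pos hi]
  · intro i hi1 hi2; rw [hTz, cat_wrd, if_neg (by omega)]
    by_cases c : i < m + n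
    · rw [if_pos c]
    · rw [if_neg c, if_pos (by omega)]
  · rw [hTz, cat_wrd, if_neg (by omega), if_neg (by omega), if_neg (by omega), if_pos rfl]
  · intro i hi
    rw [hTz, cat_wrd, if_neg (by omega), if_neg (by omega), if_neg (by omega), if_neg (by omega)]
    rw [hx']
    simp only
    rw [show n + m + 2 + (i - (m + n + 2)) = i from by omega]

/-- `T` preserves having infinitely many 0s and 1s -/
lemma T_pres {T : (ℕ → Bool) → (ℕ → Bool)} (hT : PascalLaw T) {z : ℕ → Bool}
    (h0 : Inf0 z) (h1 : Inf1 z) : Inf0 (T z) ∧ Inf1 (T z) := by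
  obtain ⟨n, m, hd0, hd1, hd2⟩ := decomp h0 h1
  have htail := (Tstep hT hd0 hd1 hd2).2.2.2
  constructor <;> intro N
  · obtain ⟨i, hi, hif⟩ := h0 (max N (n + m + 2))
    exact ⟨i, by omega, by rw [htail i (by omega)]; exact hif⟩
  · obtain ⟨i, hi, hif⟩ := h1 (max N (n + m + 2))
    exact ⟨i, by omega, by rw [htail i (by omega)]; exact hif⟩

lemma iter_pres {T : (ℕ → Bool) → (ℕ → Bool)} (hT : PascalLaw T) {z : ℕ → Bool}
    (h0 : Inf0 z) (h1 : Inf1 z) (k : ℕ) : Inf0 (T^[k] z) ∧ Inf1 (T^[k] z) := by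
  induction k with
  | zero => exact ⟨h0, h1⟩
  | succ k ih =>
    rw [Function.iterate_succ_apply']
    exact T_pres hT ih.1 ih.2

/-- the leading `1`-run: the first index carrying `false` -/
noncomputable def lead1 (z : ℕ → Bool) : ℕ := sInf {i | z i = false}

lemma lead1_spec {z : ℕ → Bool} {a : ℕ} (h : ∀ i < a, z i = true) (ha : z a = false) :
    lead1 z = a := by
  refine le_antisymm (Nat.sInf_le ha) ?_
  by_contra hlt
  push_neg at hlt
  have hmem : lead1 z ∈ {i | z i = false} := Nat.sInf_mem ⟨a, ha⟩
  have : z (lead1 z) = false := hmem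
  rw [h _ hlt] at this
  exact Bool.noConfusion this

lemma lead1_true {z : ℕ → Bool} (hz : Inf0 z) {i : ℕ} (hi : i < lead1 z) : z i = true := by
  have := Nat.notMem_of_lt_sInf hi
  have : ¬ z i = false := this
  revert this; cases z i <;> simp

lemma lead1_false {z : ℕ → Bool} (hz : Inf0 z) : z (lead1 z) = false := by
  obtain ⟨i, _, hi⟩ := hz 0
  exact Nat.sInf_mem (⟨i, hi⟩ : {i | z i = false}.Nonempty)

/-- `T` decreases the leading 1-run by one -/
lemma lead1_T {T : (ℕ → Bool) → (ℕ → Bool)} (hT : PascalLaw T) {z : ℕ → Bool}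
    (h0 : Inf0 z) (h1 : Inf1 z) (h : 1 ≤ lead1 z) :
    lead1 (T z) = lead1 z - 1 := by
  set a := lead1 z with ha
  -- z is true on [0, a), false at a; use decomposition n = 0, m = a - 1
  have hd0 : ∀ i < 0, z i = false := fun i hi => absurd hi (by omega)
  have hd1 : ∀ j ≤ a - 1, z (0 + j) = true := by
    intro j hj
    rw [Nat.zero_add]
    exact lead1_true h0 (by omega)
  have hd2 : z (0 + (a - 1) + 1) = false := by
    rw [show 0 + (a - 1) + 1 = a from by omega]
    exact lead1_false h0
  obtain ⟨ht1, ht2, ht3, ht4⟩ := Tstep hT hd0 hd1 hd2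
  exact lead1_spec (fun i hi => ht1 i hi) (ht2 (a-1) le_rfl (by omega))

/-- the structure of the code along the leading 1-run -/
lemma code_run {T : (ℕ → Bool) → (ℕ → Bool)} (hT : PascalLaw T) :
    ∀ (k : ℕ) (z : ℕ → Bool), Inf0 z → Inf1 z → k ≤ lead1 z →
      ((T^[k] z) 0 = true ↔ k < lead1 z) := by
  intro k
  induction k with
  | zero =>
    intro z h0 h1 _
    simp only [Function.iterate_zero, id_eq]
    constructor
    · intro hz
      rcases Nat.eq_zero_or_pos (lead1 z) with h | h
      · have := lead1_false h0; rw [h] at this; rw [hz] at this; exact Bool.noConfusion this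
      · exact h
    · intro h; exact lead1_true h0 h
  | succ k ih =>
    intro z h0 h1 hk
    have ha : 1 ≤ lead1 z := by omega
    have hT1 := T_pres hT h0 h1
    have hlT := lead1_T hT h0 h1 ha
    rw [Function.iterate_succ_apply]
    rw [ih (T z) hT1.1 hT1.2 (by omega)]
    omega

/-- equal codes force equal leading 1-runs -/
lemma lead1_eq {T : (ℕ → Bool) → (ℕ → Bool)} (hT : PascalLaw T) {x y : ℕ → Bool}
    (hc : ∀ j, (T^[j] x) 0 = (T^[j] y) 0)
    (hx0 : Inf0 x) (hx1 : Inf1 x) (hy0 : Inf0 y) (hy1 : Inf1 y) :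
    lead1 x = lead1 y := by
  by_contra hne
  rcases Nat.lt_or_ge (lead1 x) (lead1 y) with h | h
  · have h1 := (code_run hT (lead1 x) x hx0 hx1 le_rfl)
    have h2 := (code_run hT (lead1 x) y hy0 hy1 (le_of_lt h))
    rw [hc (lead1 x)] at h1
    have : lead1 x < lead1 y := h
    simp [this] at h2
    exact absurd (h1.mp h2) (lt_irrefl _)
  · have h' : lead1 y < lead1 x := by omega
    have h1 := (code_run hT (lead1 y) y hy0 hy1 le_rfl)
    have h2 := (code_run hT (lead1 y) x hx0 hx1 (le_of_lt h'))
    rw [← hc (lead1 y)] at h1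
    simp [h'] at h2
    exact absurd (h1.mp h2) (lt_irrefl _)

/-- colex value of the length-`d` prefix -/
def V (z : ℕ → Bool) (d : ℕ) : ℕ := ∑ i ∈ Finset.range d, (if z i = true then 2^i else 0)

lemma V_lt (z : ℕ → Bool) (d : ℕ) : V z d < 2^d := by
  induction d with
  | zero => simp [V]
  | succ d ih =>
    rw [V, Finset.sum_range_succ, ← V]
    have : (if z d = true then 2^d else 0) ≤ 2^d := by split <;> simp
    have h2 : (2:ℕ)^(d+1) = 2^d + 2^d := by ring
    omega

lemma V_mono {X Y : ℕ → Bool} {b d : ℕ} (hb : b + 1 ≤ d)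
    (hX : X b = false) (hY : Y b = true)
    (hup : ∀ i, b < i → i < d → X i = Y i) : V X d < V Y d := by
  have split : ∀ Z : ℕ → Bool, V Z d
      = V Z (b+1) + ∑ i ∈ Finset.Ico (b+1) d, (if Z i = true then 2^i else 0) := by
    intro Z
    rw [V, V, Finset.range_eq_Ico, Finset.range_eq_Ico]
    exact (Finset.sum_Ico_consecutive (fun i => (if Z i = true then 2^i else 0 : ℕ)) (by omega : 0 ≤ b + 1) (by omega : b + 1 ≤ d)).symm
  have hIco : ∑ i ∈ Finset.Ico (b+1) d, (if X i = true then 2^i else 0)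
      = ∑ i ∈ Finset.Ico (b+1) d, (if Y i = true then 2^i else 0) := by
    refine Finset.sum_congr rfl fun i hi => ?_
    rw [Finset.mem_Ico] at hi
    rw [hup i (by omega) hi.2]
  have h1 : V X (b+1) < 2^b := by
    have := V_lt X b
    rw [V, Finset.sum_range_succ, ← V, hX]
    simpa using this
  have h2 : 2^b ≤ V Y (b+1) := by
    rw [V, Finset.sum_range_succ, ← V, hY]
    simp
  rw [split X, split Y, hIco]
  omega

/-- the identical-rewrite step: first `10` occurs strictly inside the common prefix -/
lemma AStep {T : (ℕ → Bool) → (ℕ → Bool)} (hT : PascalLaw T) {x y : ℕ → Bool} {d : ℕ}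
    (hx0 : Inf0 x) (hx1 : Inf1 x)
    (hagree : ∀ i < d, x i = y i) (hne : x d ≠ y d)
    {i : ℕ} (hi : i + 1 < d) (hxi : x i = true) (hxi1 : x (i + 1) = false) :
    (∀ i' < d, T x i' = T y i') ∧ (T x d ≠ T y d) ∧ V x d < V (T x) d ∧
      (∃ i' < d, T x i' = true) := by
  obtain ⟨n, m, hd0, hd1, hd2⟩ := decomp hx0 hx1
  have hn : n ≤ i := by
    by_contra hni
    push_neg at hni
    rw [hd0 i hni] at hxi
    exact Bool.noConfusion hxi
  have hm : n + m + 2 ≤ d := by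
    by_contra hh
    push_neg at hh
    have h1 : i + 1 - n ≤ m := by omega
    have := hd1 (i + 1 - n) h1
    rw [show n + (i + 1 - n) = i + 1 from by omega, hxi1] at this
    exact Bool.noConfusion this
  have he0 : ∀ i' < n, y i' = false := fun i' h => by
    rw [← hagree i' (by omega)]; exact hd0 i' h
  have he1 : ∀ j ≤ m, y (n + j) = true := fun j hj => by
    rw [← hagree (n + j) (by omega)]; exact hd1 j hj
  have he2 : y (n + m + 1) = false := by
    rw [← hagree _ (by omega)]; exact hd2
  obtain ⟨ht1, ht2, ht3, ht4⟩ := Tstep hT hd0 hd1 hd2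
  obtain ⟨hs1, hs2, hs3, hs4⟩ := Tstep hT he0 he1 he2
  refine ⟨?_, ?_, ?_, ⟨m + n + 1, by omega, ht3⟩⟩
  · intro i' hi'
    by_cases c1 : i' < m
    · rw [ht1 i' c1, hs1 i' c1]
    · by_cases c2 : i' ≤ m + n
      · rw [ht2 i' (by omega) c2, hs2 i' (by omega) c2]
      · by_cases c3 : i' = m + n + 1
        · rw [c3, ht3, hs3]
        · rw [ht4 i' (by omega), hs4 i' (by omega)]
          exact hagree i' hi'
  · rw [ht4 d (by omega), hs4 d (by omega)]
    exact hne
  · exact V_mono (b := n + m + 1) (by omega) hd2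
      (by rw [show n + m + 1 = m + n + 1 from by omega]; exact ht3)
      (fun i' h1 h2 => (ht4 i' (by omega)).symm)

/-- the separating case: 10-free common prefix ending in a `1` -/
lemma B1 {T : (ℕ → Bool) → (ℕ → Bool)} (hT : PascalLaw T) {u v : ℕ → Bool} {n e : ℕ}
    (hc : ∀ j, (T^[j] u) 0 = (T^[j] v) 0)
    (hu0 : Inf0 u) (hu1 : Inf1 u) (hv0 : Inf0 v) (hv1 : Inf1 v)
    (hn : ∀ i < n, u i = false) (hnle : n ≤ e) (hrun : ∀ i, n ≤ i → i ≤ e → u i = true)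
    (hagree : ∀ i < e + 1, u i = v i)
    (hud : u (e + 1) = false) (hvd : v (e + 1) = true) : False := by
  -- decomposition of u ends exactly at e+1
  have hd1 : ∀ j ≤ e - n, u (n + j) = true := fun j hj => hrun (n + j) (by omega) (by omega)
  have hd2 : u (n + (e - n) + 1) = false := by
    rw [show n + (e - n) + 1 = e + 1 from by omega]; exact hud
  obtain ⟨ht1, ht2, ht3, ht4⟩ := Tstep hT hn hd1 hd2
  have hlu : lead1 (T u) = e - n :=
    lead1_spec (fun i hi => ht1 i hi) (ht2 (e - n) le_rfl (by omega))
  -- decomposition of v : run extends strictly beyond e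
  have hvne : {j | v (n + 1 + j) = false}.Nonempty := by
    obtain ⟨i, hi, hif⟩ := hv0 (n + 1)
    refine ⟨i - (n + 1), ?_⟩
    show v (n + 1 + (i - (n + 1))) = false
    rwa [show n + 1 + (i - (n + 1)) = i from by omega]
  have hvmem : v (n + 1 + sInf {j | v (n + 1 + j) = false}) = false := Nat.sInf_mem hvne
  set s := sInf {j | v (n + 1 + j) = false} with hs
  have hs_gt : e - n < s := by
    by_contra hh
    push_neg at hh
    have hvt : v (n + 1 + s) = true := by
      by_cases hcase : n + 1 + s ≤ e
      · rw [← hagree _ (by omega)]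
        exact hrun _ (by omega) hcase
      · rw [show n + 1 + s = e + 1 from by omega]
        exact hvd
    rw [hvmem] at hvt
    exact Bool.noConfusion hvt
  have he0 : ∀ i < n, v i = false := fun i hi => by
    rw [← hagree i (by omega)]; exact hn i hi
  have he1 : ∀ j ≤ s, v (n + j) = true := by
    intro j hj
    match j, hj with
    | 0, _ =>
      rw [Nat.add_zero, ← hagree n (by omega)]
      exact hrun n le_rfl hnle
    | (l+1), hj =>
      have hl : l ∉ {j | v (n + 1 + j) = false} := Nat.notMem_of_lt_sInf (by omega)
      have : ¬ v (n + 1 + l) = false := hl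
      rw [show n + (l + 1) = n + 1 + l from by omega]
      revert this; cases v (n + 1 + l) <;> simp
  have he2 : v (n + s + 1) = false := by
    rwa [show n + s + 1 = n + 1 + s from by omega]
  obtain ⟨hg1, hg2, hg3, hg4⟩ := Tstep hT he0 he1 he2
  have hlv : lead1 (T v) = s :=
    lead1_spec (fun i hi => hg1 i hi) (hg2 s le_rfl (by omega))
  have hc' : ∀ j, (T^[j] (T u)) 0 = (T^[j] (T v)) 0 := fun j => by
    have := hc (j + 1)
    rwa [Function.iterate_succ_apply, Function.iterate_succ_apply] at this
  have hpu := T_pres hT hu0 hu1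
  have hpv := T_pres hT hv0 hv1
  have := lead1_eq hT hc' hpu.1 hpu.2 hpv.1 hpv.2
  rw [hlu, hlv] at this
  omega

/-- main lemma: codes separate when the common prefix contains a `1` -/
lemma lemN {T : (ℕ → Bool) → (ℕ → Bool)} (hT : PascalLaw T) :
    ∀ (μ : ℕ) (x y : ℕ → Bool) (d : ℕ),
      (∀ j, (T^[j] x) 0 = (T^[j] y) 0) →
      Inf0 x → Inf1 x → Inf0 y → Inf1 y →
      (∀ i < d, x i = y i) → x d ≠ y d → (∃ i < d, x i = true) →
      2 ^ d - V x d ≤ μ → False := by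
  intro μ
  induction μ with
  | zero =>
    intro x y d _ _ _ _ _ _ _ _ hμ
    have := V_lt x d
    omega
  | succ μ ih =>
    intro x y d hc hx0 hx1 hy0 hy1 hagree hne hsome hμ
    by_cases hA : ∃ i, i + 1 < d ∧ x i = true ∧ x (i + 1) = false
    · obtain ⟨i, hi, hti, hfi⟩ := hA
      obtain ⟨hag', hne', hV, hsome'⟩ := AStep hT hx0 hx1 hagree hne hi hti hfi
      have hpx := T_pres hT hx0 hx1
      have hpy := T_pres hT hy0 hy1
      refine ih (T x) (T y) d ?_ hpx.1 hpx.2 hpy.1 hpy.2 hag' hne' hsome' ?_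
      · intro j
        have := hc (j + 1)
        rwa [Function.iterate_succ_apply, Function.iterate_succ_apply] at this
      · have := V_lt (T x) d
        omega
    · obtain ⟨i0, hi0, hti0⟩ := hsome
      obtain ⟨e, rfl⟩ : ∃ e, d = e + 1 := ⟨d - 1, by omega⟩
      have hnet : {i | x i = true}.Nonempty := ⟨i0, hti0⟩
      have hxn : x (sInf {i | x i = true}) = true := Nat.sInf_mem hnet
      set n := sInf {i | x i = true} with hndef
      have hn_le : n ≤ i0 := Nat.sInf_le hti0
      have hlow : ∀ i < n, x i = false := by
        intro i hi
        rw [hndef] at hi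
        have := Nat.notMem_of_lt_sInf hi
        have : ¬ x i = true := this
        revert this; cases x i <;> simp
      have hchain : ∀ k, n + k ≤ e → x (n + k) = true := by
        intro k
        induction k with
        | zero => intro _; simpa using hxn
        | succ k ihk =>
          intro hk
          have h1 := ihk (by omega)
          by_contra hff
          have hk' : x (n + k + 1) ≠ true := by
            rwa [show n + k + 1 = n + (k + 1) from by omega]
          have hff' : x (n + k + 1) = false := by
            revert hk'; cases x (n + k + 1) <;> simp
          exact hA ⟨n + k, by omega, h1, hff'⟩
      have hrun : ∀ i, n ≤ i → i ≤ e → x i = true := by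
        intro i h1 h2
        have := hchain (i - n) (by omega)
        rwa [show n + (i - n) = i from by omega] at this
      have hnle : n ≤ e := by omega
      cases hxd : x (e + 1) with
      | false =>
        have hyd : y (e + 1) = true := by
          revert hne; rw [hxd]; cases y (e + 1) <;> simp
        exact B1 hT hc hx0 hx1 hy0 hy1 hlow hnle hrun hagree hxd hyd
      | true =>
        have hyd : y (e + 1) = false := by
          revert hne; rw [hxd]; cases y (e + 1) <;> simp
        have hlow' : ∀ i < n, y i = false := fun i hi => by
          rw [← hagree i (by omega)]; exact hlow i hi
        have hrun' : ∀ i, n ≤ i → i ≤ e → y i = true := fun i h1 h2 => by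
          rw [← hagree i (by omega)]; exact hrun i h1 h2
        exact B1 hT (fun j => (hc j).symm) hy0 hy1 hx0 hx1 hlow' hnle hrun'
          (fun i hi => (hagree i hi).symm) hyd hxd

/-- the all-zero-prefix chain: forced degeneration contradicts non-diagonality -/
lemma Zchain {T : (ℕ → Bool) → (ℕ → Bool)} (hT : PascalLaw T) {x y : ℕ → Bool} {d : ℕ}
    (hc : ∀ j, (T^[j] x) 0 = (T^[j] y) 0)
    (hx0 : Inf0 x) (hx1 : Inf1 x) (hy0 : Inf0 y) (hy1 : Inf1 y)
    (hzero : ∀ i < d, x i = false) (hagree : ∀ i < d, x i = y i)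
    (hxd : x d = true) (hyd : y d = false) : False := by
  have key : ∀ k : ℕ,
      (∀ i < d + k, T^[k] x i = false) ∧ (T^[k] x (d + k) = true) ∧
      (∀ i, T^[k] x (d + k + 1 + i) = x (d + 1 + k + i)) ∧
      (∀ i ≤ d + k, T^[k] y i = false) ∧
      (∀ i, d < i → i ≤ d + k → x i = false) := by
    intro k
    induction k with
    | zero =>
      refine ⟨by simpa using hzero, by simpa using hxd, ?_, ?_, by omega⟩
      · intro i
        simpa using congrArg x (by omega : d + 0 + 1 + i = d + 1 + 0 + i)
      · intro i hi
        simp only [Function.iterate_zero, id_eq]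
        rcases Nat.lt_or_ge i d with h | h
        · rw [← hagree i h]
          exact hzero i h
        · rw [show i = d from by omega]
          exact hyd
    | succ k ihk =>
      obtain ⟨K1, K2, K3, K4, K5⟩ := ihk
      -- x-side decomposition of T^[k] x with n = d + k, m = s
      have htne : {j | x (d + 1 + k + j) = false}.Nonempty := by
        obtain ⟨i, hi, hif⟩ := hx0 (d + 1 + k)
        refine ⟨i - (d + 1 + k), ?_⟩
        show x (d + 1 + k + (i - (d + 1 + k))) = false
        rwa [show d + 1 + k + (i - (d + 1 + k)) = i from by omega]
      have hsmem : x (d + 1 + k + sInf {j | x (d + 1 + k + j) = false}) = false :=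
        Nat.sInf_mem htne
      set s := sInf {j | x (d + 1 + k + j) = false} with hsdef
      have hd1 : ∀ j ≤ s, T^[k] x (d + k + j) = true := by
        intro j hj
        match j, hj with
        | 0, _ => simpa using K2
        | (l+1), hj =>
          have hl : l ∉ {j | x (d + 1 + k + j) = false} := Nat.notMem_of_lt_sInf (by omega)
          have hl' : ¬ x (d + 1 + k + l) = false := hl
          rw [show d + k + (l + 1) = d + k + 1 + l from by omega, K3 l]
          revert hl'; cases x (d + 1 + k + l) <;> simp
      have hd2 : T^[k] x (d + k + s + 1) = false := by
        rw [show d + k + s + 1 = d + k + 1 + s from by omega, K3 s]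
        exact hsmem
      have hd2' : T^[k] x ((d + k) + s + 1) = false := hd2
      obtain ⟨ht1, ht2, ht3, ht4⟩ := Tstep hT K1 hd1 hd2'
      -- y-side decomposition
      have hpy := iter_pres hT hy0 hy1 k
      obtain ⟨n', m', hg0, hg1, hg2⟩ := decomp hpy.1 hpy.2
      have hn' : d + k < n' := by
        by_contra hh
        push_neg at hh
        have := K4 n' hh
        have h2 := hg1 0 (by omega)
        rw [Nat.add_zero] at h2
        rw [h2] at this
        exact Bool.noConfusion this
      obtain ⟨hq1, hq2, hq3, hq4⟩ := Tstep hT hg0 hg1 hg2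
      -- equal leading runs
      have hpx := iter_pres hT hx0 hx1 k
      have hcx : ∀ j, (T^[j] (T (T^[k] x))) 0 = (T^[j] (T (T^[k] y))) 0 := by
        intro j
        have h1 := hc (j + (k + 1))
        rw [Function.iterate_add_apply T j (k+1) x, Function.iterate_add_apply T j (k+1) y] at h1
        rwa [Function.iterate_succ_apply' T k x, Function.iterate_succ_apply' T k y] at h1
      have hppx := T_pres hT hpx.1 hpx.2
      have hppy := T_pres hT hpy.1 hpy.2
      have hlu : lead1 (T (T^[k] x)) = s :=
        lead1_spec (fun i hi => ht1 i hi) (ht2 s le_rfl (by omega))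
      have hlv : lead1 (T (T^[k] y)) = m' :=
        lead1_spec (fun i hi => hq1 i hi) (hq2 m' le_rfl (by omega))
      have hsm : s = m' := by
        have := lead1_eq hT hcx hppx.1 hppx.2 hppy.1 hppy.2
        rw [hlu, hlv] at this
        exact this
      by_cases hs : s = 0
      · -- the chain continues
        have hm0 : m' = 0 := by omega
        rw [hs] at ht1 ht2 ht3 ht4
        rw [hs] at hsmem
        refine ⟨?_, ?_, ?_, ?_, ?_⟩
        · intro i hi
          rw [Function.iterate_succ_apply']
          exact ht2 i (by omega) (by omega)
        · rw [Function.iterate_succ_apply']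
          have := ht3
          rwa [show 0 + (d + k) + 1 = d + (k + 1) from by omega] at this
        · intro i
          rw [Function.iterate_succ_apply']
          rw [show d + (k + 1) + 1 + i = d + k + 0 + 2 + i from by omega]
          rw [ht4 _ (by omega)]
          rw [show d + k + 0 + 2 + i = d + k + 1 + (i + 1) from by omega, K3]
          rw [show d + 1 + k + (i + 1) = d + 1 + (k + 1) + i from by omega]
        · intro i hi
          rw [Function.iterate_succ_apply']
          exact hq2 i (by omega) (by omega)
        · intro i h1 h2
          rcases Nat.lt_or_ge (d + k) i with h | h
          · rw [show i = d + 1 + k + 0 from by omega]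
            exact hsmem
          · exact K5 i h1 h

      · -- s ≥ 1 : lemN kills
        exfalso
        apply lemN hT (2 ^ (s + (d + k) + 1)) (T (T^[k] x)) (T (T^[k] y)) (s + (d + k) + 1)
          hcx hppx.1 hppx.2 hppy.1 hppy.2 ?_ ?_ ⟨0, by omega, ht1 0 (by omega)⟩
          (Nat.sub_le _ _)
        · intro i hi
          by_cases c1 : i < s
          · rw [ht1 i c1, hq1 i (by omega)]
          · rw [ht2 i (by omega) (by omega), hq2 i (by omega) (by omega)]
        · rw [show s + (d + k) + 1 = s + (d + k) + 1 from rfl]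
          rw [ht3]
          have : T (T^[k] y) (s + (d + k) + 1) = false :=
            hq2 _ (by omega) (by omega)
          rw [this]
          simp
  -- conclusion: x is eventually all false beyond d
  have hall : ∀ i, d < i → x i = false := by
    intro i hi
    exact (key (i - d)).2.2.2.2 i hi (by omega)
  obtain ⟨i, hi, hit⟩ := hx1 (d + 1)
  rw [hall i (by omega)] at hit
  exact Bool.noConfusion hit

end PascalAux

open PascalAux in
/-- The first-coordinate partition is generating: distinct points, neither of
which is eventually diagonal, have orbits separated by the first coordinate. -/
theorem coding_injective (T : (ℕ → Bool) → (ℕ → Bool)) (hT : PascalLaw T)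
    (x y : ℕ → Bool) (hxy : x ≠ y)
    (hx : ¬ EventuallyDiagonal x) (hy : ¬ EventuallyDiagonal y) :
    ∃ j : ℕ, (T^[j] x) 0 ≠ (T^[j] y) 0 := by
  by_contra hcon
  push_neg at hcon
  obtain ⟨hx0, hx1⟩ := not_ED hx
  obtain ⟨hy0, hy1⟩ := not_ED hy
  have hne_ex : ∃ i, x i ≠ y i := by
    by_contra hh
    push_neg at hh
    exact hxy (funext hh)
  have hd : x (sInf {i | x i ≠ y i}) ≠ y (sInf {i | x i ≠ y i}) := Nat.sInf_mem hne_ex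
  set d := sInf {i | x i ≠ y i} with hddef
  have hagree : ∀ i < d, x i = y i := by
    intro i hi
    rw [hddef] at hi
    have := Nat.notMem_of_lt_sInf hi
    have h2 : ¬ x i ≠ y i := this
    exact not_not.mp h2
  by_cases hsome : ∃ i < d, x i = true
  · exact lemN hT (2 ^ d) x y d hcon hx0 hx1 hy0 hy1 hagree hd hsome (Nat.sub_le _ _)
  · have hzero : ∀ i < d, x i = false := by
      intro i hi
      have h2 : ¬ x i = true := fun h' => hsome ⟨i, hi, h'⟩
      revert h2; cases x i <;> simp
    cases hxd : x d with
    | true =>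
      have hyd : y d = false := by
        revert hd; rw [hxd]; cases y d <;> simp
      exact Zchain hT hcon hx0 hx1 hy0 hy1 hzero hagree hxd hyd
    | false =>
      have hyd : y d = true := by
        revert hd; rw [hxd]; cases y d <;> simp
      have hzero' : ∀ i < d, y i = false := fun i hi => by
        rw [← hagree i hi]; exact hzero i hi
      exact Zchain hT (fun j => (hcon j).symm) hy0 hy1 hx0 hx1 hzero'
        (fun i hi => (hagree i hi).symm) hyd hxd
end

section
/- All n-blocks are seen by level n+2: if u is a word of length n that is an infix of some basic block B(l, k) (l ≥ 1, 0 ≤ k ≤ l), then there exists k' with 0 ≤ k' ≤ n+2 such that u is an infix of B(n+2, k'). -/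
/-- The basic blocks of the Pascal triangle of words (`a = false`, `b = true`):
`B(n,0) = a`, `B(n,n) = b`, and `B(n,k) = B(n−1,k) ++ B(n−1,k−1)` for `0 < k < n`. -/
def Bblk : ℕ → ℕ → List Bool
  | 0, _ => [true]
  | _ + 1, 0 => [false]
  | n + 1, k + 1 => if k + 1 = n + 1 then [true] else Bblk n (k + 1) ++ Bblk n k

lemma Bblk_zero (m : ℕ) (h : 1 ≤ m) : Bblk m 0 = [false] := by
  obtain ⟨m, rfl⟩ := Nat.exists_eq_add_of_le h
  rw [Nat.add_comm]; rfl

lemma Bblk_self (m : ℕ) : Bblk m m = [true] := by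
  cases m with
  | zero => rfl
  | succ m => simp [Bblk]

lemma Bblk_expand (m k : ℕ) (h1 : 0 < k) (h2 : k < m + 1) :
    Bblk (m + 1) k = Bblk m k ++ Bblk m (k - 1) := by
  obtain ⟨j, rfl⟩ := Nat.exists_eq_add_of_lt h1
  simp only [Nat.zero_add] at *
  rw [show j + 1 - 1 = j from rfl, Bblk, if_neg (by omega)]

lemma length_Bblk (m k : ℕ) (h : k ≤ m) : (Bblk m k).length = m.choose k := by
  induction m generalizing k with
  | zero => interval_cases k; rfl
  | succ m ih =>
    rcases Nat.eq_zero_or_pos k with rfl | hk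
    · rw [Bblk_zero _ (by omega)]; simp
    rcases eq_or_lt_of_le h with rfl | hlt
    · rw [Bblk_self]; simp
    rw [Bblk_expand m k hk hlt, List.length_append, ih k (by omega),
      ih (k-1) (by omega)]
    obtain ⟨j, rfl⟩ : ∃ j, k = j + 1 := ⟨k - 1, by omega⟩
    simp [Nat.choose_succ_succ, Nat.add_comm]

lemma choose_ge_self (m j : ℕ) (h1 : 1 ≤ j) (h2 : j < m) : m ≤ m.choose j := by
  induction m generalizing j with
  | zero => omega
  | succ m ih =>
    rcases Nat.eq_zero_or_pos (j - 1) with h0 | hj1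
    · have : j = 1 := by omega
      subst this; simp
    rcases eq_or_lt_of_le (show j ≤ m by omega) with rfl | hjm
    · rw [show (j+1).choose j = (j+1).choose 1 from Nat.choose_symm_of_eq_add (by omega)]; simp
    · have h3 := ih j h1 hjm
      have h4 : 1 ≤ m.choose (j-1) := Nat.choose_pos (by omega)
      have : (m+1).choose j = m.choose (j-1) + m.choose j := by
        obtain ⟨i, rfl⟩ : ∃ i, j = i + 1 := ⟨j - 1, by omega⟩
        simp [Nat.choose_succ_succ, Nat.add_comm]
      omega

lemma Bblk_prefix_step (m k : ℕ) (hm : 1 ≤ m) (hk : k ≤ m) :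
    Bblk m k <+: Bblk (m + 1) k := by
  rcases Nat.eq_zero_or_pos k with rfl | hk0
  · rw [Bblk_zero m hm, Bblk_zero (m+1) (by omega)]
  · rw [Bblk_expand m k hk0 (by omega)]
    exact ⟨Bblk m (k-1), rfl⟩

lemma Bblk_prefix_chain (m M k : ℕ) (hm : 1 ≤ m) (hk : k ≤ m) (hM : m ≤ M) :
    Bblk m k <+: Bblk M k := by
  obtain ⟨r, rfl⟩ := Nat.exists_eq_add_of_le hM
  clear hM
  induction r with
  | zero => exact List.prefix_rfl
  | succ r ih => exact ih.trans (Bblk_prefix_step (m+r) k (by omega) (by omega))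

lemma Bblk_suffix_step (m k : ℕ) (hk : k ≤ m) :
    Bblk m k <:+ Bblk (m + 1) (k + 1) := by
  rcases eq_or_lt_of_le hk with rfl | hlt
  · rw [Bblk_self, Bblk_self]
  · rw [Bblk_expand m (k+1) (by omega) (by omega)]
    simp only [Nat.add_sub_cancel]
    exact ⟨Bblk m (k+1), rfl⟩

lemma Bblk_suffix_chain (m k r : ℕ) (hk : k ≤ m) :
    Bblk m k <:+ Bblk (m + r) (k + r) := by
  induction r with
  | zero => exact List.suffix_rfl
  | succ r ih => exact ih.trans (Bblk_suffix_step (m+r) (k+r) (by omega))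

lemma Bblk_one (m : ℕ) : Bblk (m + 1) 1 = true :: List.replicate m false := by
  induction m with
  | zero => rfl
  | succ m ih =>
    rw [Bblk_expand (m+1) 1 one_pos (by omega), ih, Bblk_zero (m+1) (by omega)]
    simp [List.replicate_succ']

lemma Bblk_last (m : ℕ) : Bblk (m + 1) m = List.replicate m true ++ [false] := by
  induction m with
  | zero => rfl
  | succ m ih =>
    rw [Bblk_expand (m+1) (m+1) (by omega) (by omega), Bblk_self]
    simp only [Nat.add_sub_cancel, ih, List.replicate_succ]
    rfl

lemma replicate_true_prefix (m j : ℕ) (h : j < m) :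
    List.replicate j true <+: Bblk m j := by
  have h1 : Bblk (j+1) j <+: Bblk m j := Bblk_prefix_chain (j+1) m j (by omega) (by omega) (by omega)
  rw [Bblk_last j] at h1
  exact List.IsPrefix.trans ⟨[false], rfl⟩ h1

lemma replicate_false_suffix (m j : ℕ) (h1 : 1 ≤ j) (h2 : j ≤ m) :
    List.replicate (m - j) false <:+ Bblk m j := by
  have h3 : Bblk (m-j+1) 1 <:+ Bblk m j := by
    have := Bblk_suffix_chain (m-j+1) 1 (j-1) (by omega)
    rw [show m-j+1+(j-1) = m by omega, show 1+(j-1) = j by omega] at this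
    exact this
  rw [Bblk_one (m-j)] at h3
  exact (List.suffix_cons _ _).trans h3

lemma suffix_of_suffix_length_le' {α : Type*} {l₁ l₂ l₃ : List α}
    (h1 : l₁ <:+ l₃) (h2 : l₂ <:+ l₃) (h : l₁.length ≤ l₂.length) : l₁ <:+ l₂ := by
  obtain ⟨a, rfl⟩ := h2
  obtain ⟨b, hb⟩ := h1
  refine ⟨b.drop a.length, ?_⟩
  have hlen : a.length ≤ b.length := by
    have := congrArg List.length hb
    simp at this; omega
  have : b.drop a.length ++ l₁ = (b ++ l₁).drop a.length := by
    rw [List.drop_append_of_le_length hlen]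
  rw [this, hb, List.drop_append_of_le_length (le_refl _)]
  simp

lemma eq_replicate_of_suffix {s : List Bool} {N : ℕ} {c : Bool}
    (h : s <:+ List.replicate N c) : s = List.replicate s.length c := by
  exact List.eq_replicate_length.2 fun b hb => List.eq_of_mem_replicate (h.subset hb)

lemma replicate_suffix_replicate {a b : ℕ} {c : Bool} (h : a ≤ b) :
    List.replicate a c <:+ List.replicate b c := by
  refine ⟨List.replicate (b-a) c, ?_⟩
  rw [← List.replicate_add]
  congr 1; omega

lemma replicate_prefix_replicate {a b : ℕ} {c : Bool} (h : a ≤ b) :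
    List.replicate a c <+: List.replicate b c := by
  refine ⟨List.replicate (b-a) c, ?_⟩
  rw [← List.replicate_add]
  congr 1; omega

lemma junction (n j : ℕ) (s p : List Bool) (h1 : 1 ≤ j) (hj : j ≤ n + 1)
    (hs : s <:+ Bblk (n+1) j) (hp : p <+: Bblk (n+1) (j-1)) :
    s ++ p <:+: Bblk (n+2) j := by
  rw [Bblk_expand (n+1) j h1 (by omega)]
  obtain ⟨x, hx⟩ := hs
  obtain ⟨y, hy⟩ := hp
  exact ⟨x, y, by rw [← hx, ← hy]; simp⟩

lemma prefix_of_prefix_length_le' {α : Type*} {l₁ l₂ l₃ : List α}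
    (h1 : l₁ <+: l₃) (h2 : l₂ <+: l₃) (h : l₁.length ≤ l₂.length) : l₁ <+: l₂ := by
  rw [List.prefix_iff_eq_take] at h1 h2
  rw [h1, h2]
  exact List.take_prefix_take_left h

lemma infix_append_split {u A B : List Bool} (h : u <:+: A ++ B) :
    u <:+: A ∨ u <:+: B ∨
      ∃ s p, u = s ++ p ∧ s ≠ [] ∧ p ≠ [] ∧ s <:+ A ∧ p <+: B := by
  obtain ⟨x, y, hxy⟩ := h
  by_cases hc1 : x.length + u.length ≤ A.length
  · left
    have hpre : x ++ u <+: A := by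
      refine prefix_of_prefix_length_le' ⟨y, by rw [← hxy]⟩ ⟨B, rfl⟩ ?_
      simpa using hc1
    obtain ⟨t, ht⟩ := hpre
    exact ⟨x, t, by rw [← ht]⟩
  · by_cases hc2 : A.length ≤ x.length
    · right; left
      have hlen : (x ++ u ++ y).length = A.length + B.length := by rw [hxy]; simp
      simp only [List.length_append] at hlen
      have hsuf : u ++ y <:+ B := by
        refine suffix_of_suffix_length_le' ⟨x, by rw [← hxy]; simp⟩ ⟨A, rfl⟩ ?_
        simp only [List.length_append]; omega
      obtain ⟨t, ht⟩ := hsuf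
      exact ⟨t, y, by rw [← ht]; simp⟩
    · right; right
      have hxA : x.length < A.length := by omega
      have hdu : A.length - x.length ≤ u.length := by omega
      have hA : A = x ++ u.take (A.length - x.length) := by
        have e1 : (A ++ B).take A.length = A := List.take_left' rfl
        conv_lhs => rw [← e1, ← hxy]
        rw [List.append_assoc, List.take_append,
          List.take_of_length_le (le_of_lt hxA), List.take_append,
          show A.length - x.length - u.length = 0 by omega, List.take_zero,
          List.append_nil]
      have hB : B = u.drop (A.length - x.length) ++ y := by
        have e1 : (A ++ B).drop A.length = B := List.drop_left' rfl
        conv_lhs => rw [← e1, ← hxy]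
        rw [List.append_assoc, List.drop_append,
          List.drop_eq_nil_of_le (by omega), List.nil_append,
          List.drop_append,
          show A.length - x.length - u.length = 0 by omega, List.drop_zero]
      refine ⟨u.take (A.length - x.length), u.drop (A.length - x.length),
        (u.take_append_drop _).symm, ?_, ?_, ⟨x, hA.symm⟩, ⟨y, hB.symm⟩⟩
      · intro h0
        have := congrArg List.length h0
        simp only [List.length_take, List.length_drop, List.length_nil] at this
        omega
      · intro h0
        have := congrArg List.length h0
        simp only [List.length_take, List.length_drop, List.length_nil] at this
        omega

lemma eq_replicate_of_prefix {s : List Bool} {N : ℕ} {c : Bool}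
    (h : s <+: List.replicate N c) : s = List.replicate s.length c :=
  List.eq_replicate_length.2 fun b hb => List.eq_of_mem_replicate (h.subset hb)

lemma crossing (n m k : ℕ) (s p : List Bool) (hm : n + 2 ≤ m) (hk1 : 1 ≤ k)
    (hk2 : k ≤ m) (hs0 : s ≠ []) (hp0 : p ≠ []) (hsuf : s <:+ Bblk m k)
    (hpre : p <+: Bblk m (k - 1)) (hlen : s.length + p.length = n) :
    ∃ k' ≤ n + 2, s ++ p <:+: Bblk (n + 2) k' := by
  set ns := s.length with hns_def
  set np := p.length with hnp_def
  have hns : 1 ≤ ns := List.length_pos_iff.2 hs0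
  have hnp : 1 ≤ np := List.length_pos_iff.2 hp0
  set a := m - k with ha_def
  set b := k - 1 with hb_def
  have hab : a + b + 1 = m := by omega
  -- F1 : if ns ≤ a then s is all-false
  have F1 : ns ≤ a → s = List.replicate ns false := by
    intro h
    have h3 : Bblk (a+1) 1 <:+ Bblk m k := by
      have := Bblk_suffix_chain (a+1) 1 (k-1) (by omega)
      rw [show a+1+(k-1) = m by omega, show 1+(k-1) = k by omega] at this
      exact this
    have h4 : s <:+ Bblk (a+1) 1 := by
      refine suffix_of_suffix_length_le' hsuf h3 ?_
      rw [length_Bblk (a+1) 1 (by omega), Nat.choose_one_right]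
      omega
    rw [Bblk_one a] at h4
    have h5 : s <:+ List.replicate a false :=
      suffix_of_suffix_length_le' h4 (List.suffix_cons _ _) (by simp; omega)
    exact eq_replicate_of_suffix h5
  -- F2 : if np ≤ b then p is all-true
  have F2 : np ≤ b → p = List.replicate np true := by
    intro h
    have h3 : Bblk (b+1) b <+: Bblk m (k-1) := by
      have := Bblk_prefix_chain (b+1) m b (by omega) (by omega) (by omega)
      rwa [show (k:ℕ)-1 = b from rfl]
    rw [Bblk_last b] at h3
    have h4 : p <+: List.replicate b true := by
      refine prefix_of_prefix_length_le' hpre ?_ (by simp; omega)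
      exact List.IsPrefix.trans ⟨[false], rfl⟩ h3
    exact eq_replicate_of_prefix h4
  by_cases hca : a < ns
  · -- s is "rigid", p is all-true
    have hb1 : np + 2 ≤ b := by omega
    have hp := F2 (by omega)
    have hsf : s <:+ Bblk (n+1) (n+1-a) := by
      have h3 : Bblk (n+1) (n+1-a) <:+ Bblk m k := by
        have := Bblk_suffix_chain (n+1) (n+1-a) (m-(n+1)) (by omega)
        rw [show n+1+(m-(n+1)) = m by omega, show n+1-a+(m-(n+1)) = k by omega] at this
        exact this
      refine suffix_of_suffix_length_le' hsuf h3 ?_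
      rcases Nat.eq_zero_or_pos a with ha0 | ha1
      · have hsl := hsuf.length_le
        rw [length_Bblk m k (by omega), show k = m by omega, Nat.choose_self] at hsl
        rw [length_Bblk (n+1) (n+1-a) (by omega), show n+1-a = n+1 by omega,
          Nat.choose_self]
        omega
      · rw [length_Bblk (n+1) (n+1-a) (by omega)]
        have := choose_ge_self (n+1) (n+1-a) (by omega) (by omega)
        omega
    have hpf : p <+: Bblk (n+1) (n-a) := by
      rw [hp]
      refine List.IsPrefix.trans (replicate_prefix_replicate (by omega))
        (replicate_true_prefix (n+1) (n-a) (by omega))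
    refine ⟨n+1-a, by omega, ?_⟩
    have := junction n (n+1-a) s p (by omega) (by omega) hsf (by rwa [show n+1-a-1 = n-a by omega])
    exact this
  · by_cases hcb : b < np
    · -- s all-false, p is "rigid"
      have ha1 : ns + 2 ≤ a := by omega
      have hs := F1 (by omega)
      rcases Nat.eq_zero_or_pos b with hb0 | hb1
      · -- k = 1, p = [false]
        rw [hb0, Bblk_zero m (by omega)] at hpre
        have hp : p = List.replicate np false :=
          eq_replicate_of_prefix (N := 1) (by simpa [List.replicate] using hpre)
        have hnp1 : np = 1 := le_antisymm (by simpa using hpre.length_le) hnp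
        refine ⟨1, by omega, ?_⟩
        have hsu : s ++ p = List.replicate n false := by
          rw [hs, hp, ← List.replicate_add, hlen]
        rw [hsu]
        refine List.IsSuffix.isInfix ?_
        refine (replicate_suffix_replicate (show n ≤ n+1 by omega)).trans ?_
        have := replicate_false_suffix (n+2) 1 (le_refl _) (by omega)
        simpa using this
      · have hpf : p <+: Bblk (n+1) b := by
          refine prefix_of_prefix_length_le' hpre ?_ ?_
          · exact Bblk_prefix_chain (n+1) m b (by omega) (by omega) (by omega)
          · rw [length_Bblk (n+1) b (by omega)]
            have := choose_ge_self (n+1) b (by omega) (by omega)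
            omega
        have hsf : s <:+ Bblk (n+1) (b+1) := by
          rw [hs]
          refine (replicate_suffix_replicate (show ns ≤ n+1-(b+1) by omega)).trans ?_
          exact replicate_false_suffix (n+1) (b+1) (by omega) (by omega)
        refine ⟨b+1, by omega, ?_⟩
        have := junction n (b+1) s p (by omega) (by omega) hsf (by simpa using hpf)
        exact this
    · -- s all-false, p all-true
      have hs := F1 (by omega)
      have hp := F2 (by omega)
      have hsf : s <:+ Bblk (n+1) (np+1) := by
        rw [hs]
        refine (replicate_suffix_replicate (show ns ≤ n+1-(np+1) by omega)).trans ?_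
        exact replicate_false_suffix (n+1) (np+1) (by omega) (by omega)
      have hpf : p <+: Bblk (n+1) np := by
        rw [hp]
        exact replicate_true_prefix (n+1) np (by omega)
      refine ⟨np+1, by omega, ?_⟩
      have := junction n (np+1) s p (by omega) (by omega) hsf (by simpa using hpf)
      exact this


/-- All `n`-blocks are seen at level `n+2`: any word of length `n` occurring in
some basic block occurs in a basic block at level `n+2`. -/
theorem all_blocks_seen_at_level_add_two (n : ℕ) (u : List Bool) (hu : u.length = n)
    (l k : ℕ) (hl : 1 ≤ l) (hk : k ≤ l) (hinf : u <:+: Bblk l k) :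
    ∃ k' ≤ n + 2, u <:+: Bblk (n + 2) k' := by
  induction l using Nat.strong_induction_on generalizing k u with
  | _ l ih =>
  by_cases hsmall : l ≤ n + 2
  · exact ⟨k, by omega,
      hinf.trans (Bblk_prefix_chain l (n+2) k hl hk hsmall).isInfix⟩
  · push_neg at hsmall
    rcases Nat.eq_zero_or_pos k with rfl | hk0
    · rw [Bblk_zero l hl] at hinf
      exact ⟨0, by omega, by rw [Bblk_zero (n+2) (by omega)]; exact hinf⟩
    rcases eq_or_lt_of_le hk with rfl | hkl
    · rw [Bblk_self] at hinf
      exact ⟨n+2, le_refl _, by rw [Bblk_self]; exact hinf⟩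
    obtain ⟨m, rfl⟩ : ∃ m, l = m + 1 := ⟨l-1, by omega⟩
    rw [Bblk_expand m k hk0 hkl] at hinf
    rcases infix_append_split hinf with h | h | ⟨s, p, rfl, hs0, hp0, hsuf, hpre⟩
    · exact ih m (by omega) u hu k (by omega) (by omega) h
    · exact ih m (by omega) u hu (k-1) (by omega) (by omega) h
    · refine crossing n m k s p (by omega) hk0 (by omega) hs0 hp0 hsuf hpre ?_
      rw [← hu, List.length_append]
end

section
/- (Uniqueness of the telltale block) For all n, k with 2 ≤ k ≤ n−2, the telltale word b a^{n−k−1} b^{k−1} a occurs exactly once in the basic block B(n,k): the number of occurrences a(b a^{n−k−1} b^{k−1} a, B(n,k)) equals 1. -/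
/-- The number of occurrences of `u` in `w`: the number of positions `i` with
`0 ≤ i ≤ |w| − |u|` at which the contiguous sublist of `w` of length `|u|`
starting at `i` equals `u`. -/
def occ (u w : List Bool) : ℕ :=
  ((Finset.range (w.length - u.length + 1)).filter
    (fun i => (w.drop i).take u.length = u)).card

open List

namespace TellAux

lemma bblk_zero (m : ℕ) (hm : 1 ≤ m) : Bblk m 0 = [false] := by
  obtain ⟨m, rfl⟩ : ∃ m', m = m' + 1 := ⟨m - 1, by omega⟩
  rfl

lemma bblk_diag (m : ℕ) : Bblk m m = [true] := by
  cases m with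
  | zero => rfl
  | succ m => simp [Bblk]

lemma bblk_rec (m j : ℕ) (hj : 1 ≤ j) (hjm : j ≤ m) :
    Bblk (m + 1) j = Bblk m j ++ Bblk m (j - 1) := by
  obtain ⟨j, rfl⟩ : ∃ j', j = j' + 1 := ⟨j - 1, by omega⟩
  simp [Bblk, show ¬ (j + 1 = m + 1) by omega, show ¬ (j = m) by omega]

/-- every basic block with `1 ≤ j` starts with `true` -/
lemma bblk_head : ∀ m j, 1 ≤ j → ∃ v, Bblk m j = true :: v := by
  intro m
  induction m with
  | zero => intro j hj; exact ⟨[], rfl⟩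
  | succ m ih =>
    intro j hj
    by_cases h : j = m + 1
    · subst h; exact ⟨[], bblk_diag _⟩
    · by_cases h2 : j ≤ m
      · rw [bblk_rec m j hj h2]
        obtain ⟨v, hv⟩ := ih j hj
        exact ⟨v ++ Bblk m (j - 1), by rw [hv]; rfl⟩
      · -- j ≥ m + 2 : junk region, still starts with true
        obtain ⟨j, rfl⟩ : ∃ j', j = j' + 1 := ⟨j - 1, by omega⟩
        have : Bblk (m + 1) (j + 1) = Bblk m (j + 1) ++ Bblk m j := by
          simp [Bblk, h, show ¬ (j = m) by omega]
        rw [this]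
        obtain ⟨v, hv⟩ := ih (j + 1) (by omega)
        exact ⟨v ++ Bblk m j, by rw [hv]; rfl⟩

/-- blocks with `j < m` end with `false` -/
lemma bblk_last : ∀ m j, j < m → ∃ v, Bblk m j = v ++ [false] := by
  intro m
  induction m with
  | zero => intro j hj; omega
  | succ m ih =>
    intro j hj
    by_cases hj0 : j = 0
    · subst hj0; exact ⟨[], bblk_zero _ (by omega)⟩
    · rw [bblk_rec m j (by omega) (by omega)]
      by_cases h : j - 1 < m
      · obtain ⟨v, hv⟩ := ih (j - 1) h
        exact ⟨Bblk m j ++ v, by rw [hv, List.append_assoc]⟩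
      · -- j - 1 = m, i.e. j = m, contradiction with j < m+1? no: j ≤ m so j - 1 < m unless j - 1 = m
        omega

/-- suffix structure: `B(m,j) = v ++ [true] ++ a^(m-j)` for `1 ≤ j ≤ m` -/
lemma bblk_suffix : ∀ m j, 1 ≤ j → j ≤ m →
    ∃ v, Bblk m j = v ++ ([true] ++ List.replicate (m - j) false) := by
  intro m
  induction m with
  | zero => intro j h1 h2; omega
  | succ m ih =>
    intro j h1 h2
    by_cases h : j = m + 1
    · subst h; exact ⟨[], by simp [bblk_diag]⟩
    · rw [bblk_rec m j h1 (by omega)]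
      by_cases hj1 : j = 1
      · subst hj1
        obtain ⟨v, hv⟩ := ih 1 le_rfl (by omega)
        refine ⟨v, ?_⟩
        rw [hv, bblk_zero m (by omega)]
        have : m + 1 - 1 = (m - 1) + 1 := by omega
        rw [this, List.replicate_succ']
        simp [List.append_assoc]
      · obtain ⟨v, hv⟩ := ih (j - 1) (by omega) (by omega)
        refine ⟨Bblk m j ++ v, ?_⟩
        rw [hv]
        have : m - (j - 1) = m + 1 - j := by omega
        rw [this, List.append_assoc]

/-- prefix structure: `B(m,j) = b^j ++ [false] ++ v` for `1 ≤ j < m` -/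
lemma bblk_prefix : ∀ m j, 1 ≤ j → j < m →
    ∃ v, Bblk m j = List.replicate j true ++ ([false] ++ v) := by
  intro m
  induction m with
  | zero => intro j h1 h2; omega
  | succ m ih =>
    intro j h1 h2
    rw [bblk_rec m j h1 (by omega)]
    by_cases h : j < m
    · obtain ⟨v, hv⟩ := ih j h1 h
      exact ⟨v ++ Bblk m (j - 1), by rw [hv]; simp [List.append_assoc]⟩
    · -- j = m
      have hjm : j = m := by omega
      subst hjm
      rw [bblk_diag]
      by_cases hj1 : j = 1
      · subst hj1
        rw [bblk_zero 1 le_rfl]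
        exact ⟨[], rfl⟩
      · obtain ⟨v, hv⟩ := ih (j - 1) (by omega) (by omega)
        refine ⟨v, ?_⟩
        rw [hv]
        have : j = (j - 1) + 1 := by omega
        rw [this, List.replicate_succ]
        simp

lemma take_drop_infix {α : Type*} {w u : List α} {i L : ℕ} (h : (w.drop i).take L = u) :
    u <:+: w :=
  ((h ▸ List.take_prefix L (w.drop i)).isInfix).trans (List.drop_suffix i w).isInfix

lemma infix_split {α : Type*} {u X Y : List α} (h : u <:+: X ++ Y) :
    u <:+: X ∨ u <:+: Y ∨
      ∃ s1 s2, u = s1 ++ s2 ∧ s1 ≠ [] ∧ s2 ≠ [] ∧ s1 <:+ X ∧ s2 <+: Y := by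
  obtain ⟨s, t, hst⟩ := h
  have hdrop : u ++ t = (X ++ Y).drop s.length := by
    rw [← hst, List.append_assoc, List.drop_left]
  by_cases h2 : X.length ≤ s.length
  · right; left
    have h3 : (X ++ Y).drop s.length = Y.drop (s.length - X.length) := by
      rw [List.drop_append, List.drop_eq_nil_of_le h2, List.nil_append]
    have : u = (Y.drop (s.length - X.length)).take u.length := by
      rw [← h3, ← hdrop, List.take_left]
    exact take_drop_infix this.symm
  · push_neg at h2
    have hXY : (X ++ Y).drop s.length = X.drop s.length ++ Y := by
      rw [List.drop_append, Nat.sub_eq_zero_of_le (le_of_lt h2),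
        List.drop_zero]
    rw [hXY] at hdrop
    have hlenA : (X.drop s.length).length = X.length - s.length := by
      simp [List.length_drop]
    by_cases h1 : s.length + u.length ≤ X.length
    · left
      have h4 : (u ++ t).take u.length = (X.drop s.length ++ Y).take u.length := by
        rw [hdrop]
      rw [List.take_left, List.take_append,
        Nat.sub_eq_zero_of_le (by rw [hlenA]; omega), List.take_zero, List.append_nil] at h4
      exact take_drop_infix h4.symm
    · right; right
      push_neg at h1
      have hc1 : 0 < X.length - s.length := by omega
      have hc2 : X.length - s.length < u.length := by omega
      refine ⟨u.take (X.length - s.length), u.drop (X.length - s.length),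
        (List.take_append_drop _ u).symm, ?_, ?_, ?_, ?_⟩
      · intro hnil
        have := congrArg List.length hnil
        simp only [List.length_take, List.length_nil] at this
        omega
      · intro hnil
        have := congrArg List.length hnil
        simp only [List.length_drop, List.length_nil] at this
        omega
      · have h4 : (u ++ t).take (X.length - s.length)
            = (X.drop s.length ++ Y).take (X.length - s.length) := by rw [hdrop]
        rw [List.take_append, List.take_append,
          Nat.sub_eq_zero_of_le (le_of_lt hc2), hlenA, Nat.sub_self,
          List.take_zero, List.take_zero, List.append_nil, List.append_nil,
          List.take_of_length_le (le_of_eq hlenA)] at h4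
        rw [h4]
        exact List.drop_suffix _ _
      · have h3 : (u ++ t).drop (X.length - s.length)
            = (X.drop s.length ++ Y).drop (X.length - s.length) := by rw [hdrop]
        rw [List.drop_append, List.drop_append,
          Nat.sub_eq_zero_of_le (le_of_lt hc2), List.drop_zero,
          List.drop_eq_nil_of_le (le_of_eq hlenA), hlenA, Nat.sub_self, List.drop_zero,
          List.nil_append] at h3
        exact ⟨t, h3⟩
end TellAux

namespace TellAux
open List

lemma suffix_unique {X s1 s2 : List Bool} (h1 : s1 <:+ X) (h2 : s2 <:+ X)
    (hl : s1.length = s2.length) : s1 = s2 := by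
  rw [List.suffix_iff_eq_drop] at h1 h2
  rw [h1, h2, hl]



/-- `a^(m-j) b` is not a factor of `B(m,j)` for `1 ≤ j < m` -/
lemma noC1' : ∀ m j, 1 ≤ j → j < m →
    ¬ (List.replicate (m - j) false ++ [true]) <:+: Bblk m j := by
  intro m
  induction m with
  | zero => intro j h1 h2; omega
  | succ m ih =>
    intro j h1 h2 h
    rw [bblk_rec m j h1 (by omega)] at h
    rcases infix_split h with hX | hY | ⟨s1, s2, he, hn1, hn2, hs1, hs2⟩
    · by_cases hjm : j = m
      · subst hjm
        rw [bblk_diag] at hX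
        have := hX.length_le
        simp at this
      · have hsub : (List.replicate (m - j) false ++ [true])
            <:+: (List.replicate (m + 1 - j) false ++ [true]) := by
          refine ⟨[false], [], ?_⟩
          have : m + 1 - j = (m - j) + 1 := by omega
          rw [this, List.replicate_succ]
          simp
        exact ih j h1 (by omega) (hsub.trans hX)
    · by_cases hj1 : j = 1
      · subst hj1
        rw [bblk_zero m (by omega)] at hY
        have := hY.length_le
        simp at this
        omega
      · have hm : m - (j - 1) = m + 1 - j := by omega
        exact ih (j - 1) (by omega) (by omega) (by rw [hm]; exact hY)
    · -- crossing occurrence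
      have ha : s1.length ≤ m + 1 - j := by
        have hlen := congrArg List.length he
        simp at hlen
        have h0 : 1 ≤ s2.length := by
          rcases Nat.eq_zero_or_pos s2.length with h' | h'
          · exact absurd (List.eq_nil_of_length_eq_zero h') hn2
          · exact h'
        omega
      have hs2' : s2 = (List.replicate (m + 1 - j) false ++ [true]).drop s1.length := by
        rw [he, List.drop_left]
      rw [List.drop_append, List.drop_replicate, List.length_replicate,
        Nat.sub_eq_zero_of_le ha, List.drop_zero] at hs2'
      by_cases hj1 : j = 1
      · subst hj1
        rw [bblk_zero m (by omega)] at hs2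
        obtain ⟨t, ht⟩ := hs2
        rw [hs2'] at ht
        have hlb := congrArg List.length ht
        simp at hlb
        have hb0 : m + 1 - 1 - s1.length = 0 := by omega
        have ht0 : t = [] := List.eq_nil_of_length_eq_zero (by omega)
        rw [hb0, ht0] at ht
        simp at ht
      · obtain ⟨v, hv⟩ := bblk_head m (j - 1) (by omega)
        rw [hv] at hs2
        obtain ⟨t, ht⟩ := hs2
        rw [hs2'] at ht
        by_cases hb : m + 1 - j - s1.length = 0
        · -- s2 = [true], s1 = replicate (m+1-j) false, but suffix of X starts with true
          have hlen1 : s1.length = m + 1 - j := by omega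
          have hsuf : ([true] ++ List.replicate (m - j) false) <:+ Bblk m j := by
            obtain ⟨v', hv'⟩ := bblk_suffix m j h1 (by omega)
            exact ⟨v', hv'.symm⟩
          have heq : s1 = [true] ++ List.replicate (m - j) false :=
            suffix_unique hs1 hsuf (by simp [hlen1]; omega)
          have heq2 : List.take s1.length (s1 ++ s2) = s1 := List.take_left
          rw [← he, hlen1, List.take_append, List.take_replicate,
            List.length_replicate, Nat.sub_self, List.take_zero, List.append_nil,
            Nat.min_self] at heq2
          rw [heq] at heq2
          have hms : m + 1 - j = (m - j) + 1 := by omega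
          rw [hms, List.replicate_succ] at heq2
          simp at heq2
        · obtain ⟨c, hc⟩ : ∃ c, m + 1 - j - s1.length = c + 1 := ⟨m + 1 - j - s1.length - 1, by omega⟩
          rw [hc, List.replicate_succ] at ht
          simp at ht

/-- `a b^r a` is not a factor of `B(m,j)` for `1 ≤ j ≤ m`, `j ≤ r` -/
lemma noC2' : ∀ m j r, 1 ≤ j → j ≤ m → j ≤ r →
    ¬ ([false] ++ (List.replicate r true ++ [false])) <:+: Bblk m j := by
  intro m
  induction m with
  | zero => intro j r h1 h2 h3; omega
  | succ m ih =>
    intro j r h1 h2 h3 h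
    by_cases hjm : j = m + 1
    · subst hjm
      rw [bblk_diag] at h
      have := h.length_le
      simp at this
    · rw [bblk_rec m j h1 (by omega)] at h
      rcases infix_split h with hX | hY | ⟨s1, s2, he, hn1, hn2, hs1, hs2⟩
      · exact ih j r h1 (by omega) h3 hX
      · by_cases hj1 : j = 1
        · subst hj1
          rw [bblk_zero m (by omega)] at hY
          have := hY.length_le
          simp at this
        · exact ih (j - 1) r (by omega) (by omega) (by omega) hY
      · -- crossing occurrence
        have ha : s1.length ≤ r + 1 := by
          have hlen := congrArg List.length he
          simp at hlen
          have h0 : 1 ≤ s2.length := by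
            rcases Nat.eq_zero_or_pos s2.length with h' | h'
            · exact absurd (List.eq_nil_of_length_eq_zero h') hn2
            · exact h'
          omega
        have ha1 : 1 ≤ s1.length := by
          rcases Nat.eq_zero_or_pos s1.length with h' | h'
          · exact absurd (List.eq_nil_of_length_eq_zero h') hn1
          · exact h'
        obtain ⟨a, haa⟩ : ∃ a, s1.length = a + 1 := ⟨s1.length - 1, by omega⟩
        -- s2 = replicate (r - a) true ++ [false]
        have hs2' : s2 = List.replicate (r - a) true ++ [false] := by
          have : s2 = (([false] ++ (List.replicate r true ++ [false]))).drop s1.length := by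
            rw [he, List.drop_left]
          rw [haa] at this
          rw [this]
          have hstep : (([false] ++ (List.replicate r true ++ [false]))).drop (a + 1)
              = (List.replicate r true ++ [false]).drop a := by
            simp [List.drop_append]
          rw [hstep, List.drop_append, List.drop_replicate,
            List.length_replicate]
          have har : a - r = 0 := by omega
          rw [har, List.drop_zero]
        -- s1 = false :: replicate a true
        have hs1' : s1 = false :: List.replicate a true := by
          have heq2 : List.take s1.length (s1 ++ s2) = s1 := List.take_left
          rw [← he, haa] at heq2
          rw [← heq2]
          have hstep : (([false] ++ (List.replicate r true ++ [false]))).take (a + 1)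
              = false :: (List.replicate r true ++ [false]).take a := by
            simp [List.take_append]
          rw [hstep, List.take_append, List.take_replicate,
            List.length_replicate]
          have har : a - r = 0 := by omega
          rw [har, List.take_zero, List.append_nil, Nat.min_eq_left (by omega)]
        -- s1 ends with true when a ≥ 1 ; X ends with false
        have hs1end : 1 ≤ a → False := by
          intro ha2
          have htr : [true] <:+ s1 := by
            refine ⟨false :: List.replicate (a - 1) true, ?_⟩
            rw [hs1']
            have : a = (a - 1) + 1 := by omega
            rw [this, List.replicate_succ']
            simp
          by_cases hjm2 : j = m
          · subst hjm2
            rw [bblk_diag] at hs1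
            have := hs1.length_le
            rw [haa] at this
            simp at this
            omega
          · obtain ⟨v, hv⟩ := bblk_last m j (by omega)
            have hfs : [false] <:+ Bblk m j := ⟨v, hv.symm⟩
            have := suffix_unique (htr.trans hs1) hfs rfl
            simp at this
        by_cases hj1 : j = 1
        · -- Y = [false] forces s2 = [false], so a = r ≥ 1
          subst hj1
          rw [bblk_zero m (by omega)] at hs2
          obtain ⟨t, ht⟩ := hs2
          rw [hs2'] at ht
          have hlb := congrArg List.length ht
          simp at hlb
          exact hs1end (by omega)
        · -- Y starts with replicate (j-1) true ++ [false]
          obtain ⟨w, hw⟩ := bblk_prefix m (j - 1) (by omega) (by omega)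
          rw [hw] at hs2
          obtain ⟨t, ht⟩ := hs2
          rw [hs2'] at ht
          rcases Nat.lt_trichotomy (r - a) (j - 1) with hlt | heq | hgt
          · -- s2 too short : [false] meets true
            exfalso
            have hsplit : List.replicate (j - 1) true
                = List.replicate (r - a) true ++ List.replicate (j - 1 - (r - a)) true := by
              rw [← List.replicate_add]
              congr 1
              omega
            rw [hsplit] at ht
            rw [List.append_assoc, List.append_assoc] at ht
            have ht2 := List.append_cancel_left ht
            obtain ⟨c, hc⟩ : ∃ c, j - 1 - (r - a) = c + 1 := ⟨j - 1 - (r - a) - 1, by omega⟩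
            rw [hc, List.replicate_succ] at ht2
            simp at ht2
          · -- exact match forces a = r - (j-1) ≥ 1
            exact hs1end (by omega)
          · -- s2 too long : true meets [false]
            exfalso
            have hsplit : List.replicate (r - a) true
                = List.replicate (j - 1) true ++ List.replicate ((r - a) - (j - 1)) true := by
              rw [← List.replicate_add]
              congr 1
              omega
            rw [hsplit] at ht
            rw [List.append_assoc, List.append_assoc] at ht
            have ht2 := List.append_cancel_left ht
            obtain ⟨c, hc⟩ : ∃ c, (r - a) - (j - 1) = c + 1 := ⟨(r - a) - (j - 1) - 1, by omega⟩
            rw [hc, List.replicate_succ] at ht2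
            simp at ht2

lemma main' (p q : ℕ) (hp : 1 ≤ p) (hq : 1 ≤ q) :
    occ ([true] ++ List.replicate p false ++ List.replicate q true ++ [false])
      (Bblk (p + q + 2) (q + 1)) = 1 := by
  have hrec : Bblk (p + q + 2) (q + 1) = Bblk (p + q + 1) (q + 1) ++ Bblk (p + q + 1) q := by
    have := bblk_rec (p + q + 1) (q + 1) (by omega) (by omega)
    simpa using this
  set X := Bblk (p + q + 1) (q + 1) with hXdef
  set Y := Bblk (p + q + 1) q with hYdef
  obtain ⟨v, hX⟩ : ∃ v, X = v ++ ([true] ++ List.replicate p false) := by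
    obtain ⟨v, hv⟩ := bblk_suffix (p + q + 1) (q + 1) (by omega) (by omega)
    rw [show p + q + 1 - (q + 1) = p by omega] at hv
    exact ⟨v, hv⟩
  obtain ⟨w, hY⟩ : ∃ w, Y = List.replicate q true ++ ([false] ++ w) :=
    bblk_prefix (p + q + 1) q hq (by omega)
  have hXlen : X.length = v.length + (p + 1) := by
    rw [hX]; simp
  have hYlen : Y.length = q + 1 + w.length := by
    rw [hY]; simp; omega
  set T : List Bool := [true] ++ List.replicate p false ++ List.replicate q true ++ [false]
    with hTdef
  have hTgroup : T = ([true] ++ List.replicate p false) ++ (List.replicate q true ++ [false]) := by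
    simp [hTdef, List.append_assoc]
  have hTlen : T.length = p + q + 2 := by
    simp [hTdef]; omega
  have h5 : ([true] ++ List.replicate p false).length = p + 1 := by simp
  rw [hrec]
  show ((Finset.range ((X ++ Y).length - T.length + 1)).filter
      (fun i => ((X ++ Y).drop i).take T.length = T)).card = 1
  have hset : (Finset.range ((X ++ Y).length - T.length + 1)).filter
      (fun i => ((X ++ Y).drop i).take T.length = T) = {v.length} := by
    ext i
    simp only [Finset.mem_filter, Finset.mem_range, Finset.mem_singleton]
    constructor
    · rintro ⟨hiM, hQ⟩
      by_cases hcase1 : i + (p + q + 2) ≤ X.length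
      · -- occurrence inside X : contradiction with noC1'
        exfalso
        have hdrop : (X ++ Y).drop i = X.drop i ++ Y := by
          rw [List.drop_append, Nat.sub_eq_zero_of_le (by omega), List.drop_zero]
        rw [hdrop, List.take_append,
          Nat.sub_eq_zero_of_le (by rw [hTlen, List.length_drop]; omega),
          List.take_zero, List.append_nil] at hQ
        have hinf : T <:+: X := take_drop_infix hQ
        have hsub : (List.replicate p false ++ [true]) <:+: T := by
          refine ⟨[true], List.replicate (q - 1) true ++ [false], ?_⟩
          rw [hTdef]
          rw [show q = (q - 1) + 1 by omega, List.replicate_succ]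
          simp
        have := noC1' (p + q + 1) (q + 1) (by omega) (by omega)
        rw [show p + q + 1 - (q + 1) = p by omega] at this
        exact this (hsub.trans hinf)
      · by_cases hcase2 : X.length ≤ i
        · -- occurrence inside Y : contradiction with noC2'
          exfalso
          have hdrop : (X ++ Y).drop i = Y.drop (i - X.length) := by
            rw [List.drop_append, List.drop_eq_nil_of_le hcase2,
              List.nil_append]
          rw [hdrop] at hQ
          have hinf : T <:+: Y := take_drop_infix hQ
          have hsub : ([false] ++ (List.replicate q true ++ [false])) <:+: T := by
            refine ⟨[true] ++ List.replicate (p - 1) false, [], ?_⟩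
            rw [hTdef]
            rw [show p = (p - 1) + 1 by omega, List.replicate_succ']
            simp
          exact noC2' (p + q + 1) q q hq (by omega) le_rfl (hsub.trans hinf)
        · -- crossing occurrence : pin down the position
          push_neg at hcase1 hcase2
          have hdrop : (X ++ Y).drop i = X.drop i ++ Y := by
            rw [List.drop_append, Nat.sub_eq_zero_of_le (by omega),
              List.drop_zero]
          have hjlen : (X.drop i).length = X.length - i := List.length_drop
          rw [hdrop, List.take_append,
            List.take_of_length_le (by rw [hjlen, hTlen]; omega), hjlen, hTlen] at hQ
          obtain ⟨j, hjdef⟩ : ∃ j, X.length - i = j := ⟨_, rfl⟩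
          rw [hjdef] at hQ hjlen
          have hj1 : 1 ≤ j := by omega
          have hj2 : j ≤ p + q + 1 := by omega
          have hYside : List.take (p + q + 2 - j) Y = T.drop j := by
            have h9 := congrArg (List.drop j) hQ
            rw [List.drop_append, hjlen, Nat.sub_self, List.drop_zero,
              List.drop_eq_nil_of_le (le_of_eq hjlen), List.nil_append] at h9
            exact h9
          rcases Nat.lt_trichotomy j (p + 1) with hlt | heqj | hgt
          · -- 1 ≤ j ≤ p : false/true head mismatch
            exfalso
            obtain ⟨j', hj'⟩ : ∃ j', j = j' + 1 := ⟨j - 1, by omega⟩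
            have hTd : T.drop j
                = List.replicate (p - j') false ++ (List.replicate q true ++ [false]) := by
              rw [hTgroup, List.drop_append, h5]
              rw [show j - (p + 1) = 0 by omega, List.drop_zero, hj']
              congr 1
              rw [show ([true] ++ List.replicate p false).drop (j' + 1)
                  = (List.replicate p false).drop j' from by simp, List.drop_replicate]
            rw [hTd, show p - j' = (p - j' - 1) + 1 by omega, List.replicate_succ] at hYside
            obtain ⟨s, hs⟩ : ∃ s, p + q + 2 - j = s + 1 := ⟨p + q + 2 - j - 1, by omega⟩
            obtain ⟨q', hq'⟩ : ∃ q', q = q' + 1 := ⟨q - 1, by omega⟩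
            rw [hY, hs, hq', List.replicate_succ] at hYside
            simp at hYside
          · -- j = p + 1 : this is the junction position
            omega
          · -- p + 2 ≤ j : [true]/[false] mismatch at the end
            exfalso
            have hTd : T.drop j = List.replicate (q - (j - (p + 1))) true ++ [false] := by
              rw [hTgroup, List.drop_append, h5,
                List.drop_eq_nil_of_le (by rw [h5]; omega), List.nil_append,
                List.drop_append, List.drop_replicate, List.length_replicate]
              rw [show j - (p + 1) - q = 0 by omega, List.drop_zero]
            have hYt : List.take (p + q + 2 - j) Y
                = List.replicate (q + 1 - (j - (p + 1))) true := by
              rw [hY, List.take_append, List.take_replicate,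
                List.length_replicate, Nat.min_eq_left (by omega)]
              rw [show p + q + 2 - j - q = 0 by omega, List.take_zero, List.append_nil]
              congr 1
              omega
            rw [hYt, hTd] at hYside
            rw [show q + 1 - (j - (p + 1)) = (q - (j - (p + 1))) + 1 by omega,
              List.replicate_succ'] at hYside
            have := List.append_cancel_left hYside
            simp at this
    · rintro rfl
      refine ⟨?_, ?_⟩
      · rw [List.length_append, hXlen, hYlen, hTlen]
        omega
      · have hdropX : (X ++ Y).drop v.length = ([true] ++ List.replicate p false) ++ Y := by
          rw [hX, List.append_assoc, List.drop_left]
        rw [hdropX, List.take_append,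
          List.take_of_length_le (by rw [h5, hTlen]; omega), hTlen, h5,
          show p + q + 2 - (p + 1) = q + 1 by omega, hY, ← List.append_assoc,
          List.take_append,
          List.take_of_length_le (by simp),
          show q + 1 - (List.replicate q true ++ [false]).length = 0 by simp,
          List.take_zero, List.append_nil, hTgroup]
  rw [hset]
  simp

end TellAux

/-- Uniqueness of the telltale block: for `2 ≤ k ≤ n−2`, the telltale word
`b a^{n−k−1} b^{k−1} a` occurs exactly once in `B(n,k)`. -/
theorem telltale_unique (n k : ℕ) (hk2 : 2 ≤ k) (hkn : k + 2 ≤ n) :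
    occ ([true] ++ List.replicate (n - k - 1) false
          ++ List.replicate (k - 1) true ++ [false]) (Bblk n k) = 1 := by
  have h := TellAux.main' (n - k - 1) (k - 1) (by omega) (by omega)
  rw [show n - k - 1 + (k - 1) + 2 = n by omega, show k - 1 + 1 = k by omega] at h
  exact h
end
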